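/- arXiv:1109.5596 — 2 statements merged into one kernel-verified Lean document; each statement's English description precedes it below -/
import Mathlib

section
/- For infinitely many N there exist a set S of N points in the plane in general position and a triangulation T of S such that every set of ps-flippable edges of T has size at most N/2 − 2; that is, the bound N/2 − 2 on the size of a guaranteed set of ps-flippable edges is tight. -/
open scoped Classical

noncomputable section

/-- Points of the plane. -/
abbrev Pt : Type := ℝ × ℝ

/-- A finite point set is in general position if no three of its points are collinear. -/
def GenPos (S : Finset Pt) : Prop :=
  ∀ p ∈ S, ∀ q ∈ S, ∀ r ∈ S, p ≠ q → p ≠ r → q ≠ r →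
    ¬ Collinear ℝ ({p, q, r} : Set Pt)

/-- The closed straight segment spanned by an unordered pair of points. -/
def seg2 (e : Sym2 Pt) : Set Pt :=
  Sym2.lift ⟨fun p q => segment ℝ p q, fun p q => segment_symm ℝ p q⟩ e

/-- A crossing-free straight-edge graph (plane graph) on the point set `S`:
its edges are straight segments between points of `S`, any two of which
meet only at shared endpoints. -/
structure PlaneGraph (S : Finset Pt) where
  edges : Finset (Sym2 Pt)
  endpoint_mem : ∀ e ∈ edges, ∀ p, p ∈ e → p ∈ S
  not_isDiag : ∀ e ∈ edges, ¬ e.IsDiag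
  noncrossing : ∀ e₁ ∈ edges, ∀ e₂ ∈ edges, e₁ ≠ e₂ →
    ∀ x ∈ seg2 e₁ ∩ seg2 e₂, x ∈ e₁ ∧ x ∈ e₂

/-- A triangulation of `S` is a maximal plane graph on `S`. -/
def IsTriangulation {S : Finset Pt} (T : PlaneGraph S) : Prop :=
  ∀ G : PlaneGraph S, T.edges ⊆ G.edges → G.edges = T.edges

/-- `tr S`: the number of triangulations of `S`. -/
def triCount (S : Finset Pt) : ℕ :=
  Nat.card {T : PlaneGraph S // IsTriangulation T}

/-- A plane graph is a spanning cycle of `S` if its edges form a Hamiltonian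
cycle on `S`. -/
def IsSpanningCycle {S : Finset Pt} (G : PlaneGraph S) : Prop :=
  3 ≤ S.card ∧ ∃ f : Fin S.card ≃ {p : Pt // p ∈ S},
    G.edges =
      Finset.image (fun i : Fin S.card => s(((f i : Pt)), ((f (finRotate S.card i) : Pt)))) Finset.univ

/-- `sc S`: the number of crossing-free straight-edge spanning cycles of `S`. -/
def scCount (S : Finset Pt) : ℕ :=
  Nat.card {G : PlaneGraph S // IsSpanningCycle G}

/-- A plane graph is a perfect matching of `S` if every point of `S` is incident
to exactly one edge. -/
def IsPerfectMatching {S : Finset Pt} (G : PlaneGraph S) : Prop :=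
  ∀ p ∈ S, ∃! e, e ∈ G.edges ∧ p ∈ e

/-- `pm S`: the number of crossing-free straight-edge perfect matchings of `S`. -/
def pmCount (S : Finset Pt) : ℕ :=
  Nat.card {G : PlaneGraph S // IsPerfectMatching G}

/-- The support of a plane graph `G` on `S`: the number of triangulations of `S`
containing all edges of `G`. -/
def supp {S : Finset Pt} (G : PlaneGraph S) : ℕ :=
  Nat.card {T : PlaneGraph S // IsTriangulation T ∧ G.edges ⊆ T.edges}

/-- A finite set of points is in (strictly) convex position. -/
def InConvexPosition (Q : Finset Pt) : Prop :=
  ∀ p ∈ Q, p ∉ convexHull ℝ (↑(Q.erase p) : Set Pt)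

/-- `p q` is an edge of the convex hull boundary of `Q`. -/
def IsHullEdgeOf (Q : Finset Pt) (p q : Pt) : Prop :=
  p ∈ Q ∧ q ∈ Q ∧ p ≠ q ∧
    segment ℝ p q ⊆ frontier (convexHull ℝ (Q : Set Pt))

/-- `e` is a diagonal of the convex polygon with vertex set `Q`. -/
def IsDiagonalOf (Q : Finset Pt) (e : Sym2 Pt) : Prop :=
  ∃ p ∈ Q, ∃ q ∈ Q, e = s(p, q) ∧
    openSegment ℝ p q ⊆ interior (convexHull ℝ (Q : Set Pt))

/-- `F` is a set of ps-flippable (pseudo-simultaneously flippable) edges of the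
triangulation `T`: the edges of `F` are diagonals of pairwise interior-disjoint
(empty) convex polygons whose boundary edges all belong to `T`. -/
def IsPsFlippable {S : Finset Pt} (T : PlaneGraph S) (F : Finset (Sym2 Pt)) : Prop :=
  F ⊆ T.edges ∧
  ∃ 𝒬 : Finset (Finset Pt),
    (∀ Q ∈ 𝒬, ↑Q ⊆ (S : Set Pt) ∧ 3 ≤ Q.card ∧ InConvexPosition Q ∧
      (∀ p q, IsHullEdgeOf Q p q → s(p, q) ∈ T.edges) ∧
      (∀ p ∈ S, p ∉ interior (convexHull ℝ (Q : Set Pt)))) ∧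
    (∀ Q ∈ 𝒬, ∀ Q' ∈ 𝒬, Q ≠ Q' →
      interior (convexHull ℝ (Q : Set Pt)) ∩ interior (convexHull ℝ (Q' : Set Pt)) = ∅) ∧
    (∀ e ∈ F, ∃ Q ∈ 𝒬, IsDiagonalOf Q e)

/-- The drawing of a plane graph: the union of its (closed) edge segments and
its vertex set. -/
def drawing {S : Finset Pt} (G : PlaneGraph S) : Set Pt :=
  (⋃ e ∈ G.edges, seg2 e) ∪ (S : Set Pt)

/-- A convex decomposition of `S`: a plane graph containing all convex hull
boundary edges, whose bounded faces are all convex, and with no isolated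
vertices. -/
def IsConvexDecomposition {S : Finset Pt} (D : PlaneGraph S) : Prop :=
  (∀ p q, IsHullEdgeOf S p q → s(p, q) ∈ D.edges) ∧
  (∀ x ∉ drawing D, Bornology.IsBounded (connectedComponentIn (drawing D)ᶜ x) →
    Convex ℝ (connectedComponentIn (drawing D)ᶜ x)) ∧
  (∀ p ∈ S, ∃ e ∈ D.edges, p ∈ e)

/-- `p` is an interior vertex of `S` (not on the convex hull boundary). -/
def InteriorVtx (S : Finset Pt) (p : Pt) : Prop :=
  p ∈ S ∧ p ∉ frontier (convexHull ℝ (S : Set Pt))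

/-- `p` has a valid triple of edges in `G`. -/
def IsValidAt {S : Finset Pt} (G : PlaneGraph S) (p : Pt) : Prop :=
  ∃ a ∈ S, ∃ b ∈ S, ∃ c ∈ S,
    p ∈ convexHull ℝ ({a, b, c} : Set Pt) ∧
    s(p, a) ∈ G.edges ∧ s(p, b) ∈ G.edges ∧ s(p, c) ∈ G.edges

/-- The degree of a point in a plane graph. -/
def degree {S : Finset Pt} (G : PlaneGraph S) (p : Pt) : ℕ :=
  (G.edges.filter (fun e => p ∈ e)).card

/-- `a b c` span a triangular face of the triangulation `T`. -/
def IsTriFace {S : Finset Pt} (T : PlaneGraph S) (a b c : Pt) : Prop :=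
  a ∈ S ∧ b ∈ S ∧ c ∈ S ∧
  s(a, b) ∈ T.edges ∧ s(b, c) ∈ T.edges ∧ s(a, c) ∈ T.edges ∧
  ∀ p ∈ S, p ∉ interior (convexHull ℝ ({a, b, c} : Set Pt))

/-- An edge of a triangulation is flippable if its two incident triangles form
a convex quadrilateral. -/
def IsFlippable {S : Finset Pt} (T : PlaneGraph S) (e : Sym2 Pt) : Prop :=
  e ∈ T.edges ∧ ∃ a b c d : Pt, e = s(a, b) ∧ c ≠ d ∧
    IsTriFace T a b c ∧ IsTriFace T a b d ∧
    (openSegment ℝ a b ∩ openSegment ℝ c d).Nonempty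

/-- `flip T`: the number of flippable edges of `T`. -/
def flipCount {S : Finset Pt} (T : PlaneGraph S) : ℕ :=
  (T.edges.filter (fun e => IsFlippable T e)).card

/-- `v3 T`: the number of interior vertices of degree 3 in `T`. -/
def v3 {S : Finset Pt} (T : PlaneGraph S) : ℕ :=
  (S.filter (fun p => p ∉ frontier (convexHull ℝ (S : Set Pt)) ∧ degree T p = 3)).card

/-- The number of vertices of `S` on its convex hull boundary. -/
def hullVtxCount (S : Finset Pt) : ℕ :=
  (S.filter (fun p => p ∈ frontier (convexHull ℝ (S : Set Pt)))).card


/-! ### Foundations -/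

def det3 (p q r : Pt) : ℝ := (q.1-p.1)*(r.2-p.2) - (r.1-p.1)*(q.2-p.2)

def lin (α β γ : ℝ) (p : Pt) : ℝ := α*p.1 + β*p.2 + γ

@[simp] lemma seg2_mk (a b : Pt) : seg2 s(a,b) = segment ℝ a b := rfl

lemma mem_seg {x a b : Pt} (hx : x ∈ segment ℝ a b) :
    ∃ s t : ℝ, 0 ≤ s ∧ 0 ≤ t ∧ s + t = 1 ∧ x.1 = s*a.1 + t*b.1 ∧ x.2 = s*a.2 + t*b.2 := by
  obtain ⟨s, t, hs, ht, hst, rfl⟩ := hx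
  exact ⟨s, t, hs, ht, hst, by simp [Prod.smul_fst, smul_eq_mul],
    by simp [Prod.smul_snd, smul_eq_mul]⟩

lemma seg_mem' {a b : Pt} {s t : ℝ} (hs : 0 ≤ s) (ht : 0 ≤ t) (hst : s + t = 1) :
    (s*a.1 + t*b.1, s*a.2 + t*b.2) ∈ segment ℝ a b := by
  exact ⟨s, t, hs, ht, hst, by ext <;> simp [Prod.smul_fst, Prod.smul_snd, smul_eq_mul]⟩

lemma lin_seg {α β γ : ℝ} {x a b : Pt} (hx : x ∈ segment ℝ a b) :
    ∃ s t : ℝ, 0 ≤ s ∧ 0 ≤ t ∧ s + t = 1 ∧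
      lin α β γ x = s * lin α β γ a + t * lin α β γ b ∧
      x.1 = s*a.1 + t*b.1 ∧ x.2 = s*a.2 + t*b.2 := by
  obtain ⟨s, t, hs, ht, hst, h1, h2⟩ := mem_seg hx
  refine ⟨s, t, hs, ht, hst, ?_, h1, h2⟩
  simp only [lin, h1, h2]; linear_combination (-γ) * hst

/-- Separation: if `a,b` are on the (weakly) negative side and `c,d` strictly positive,
the segments are disjoint. -/
lemma sep0 {α β γ : ℝ} {a b c d : Pt} (ha : lin α β γ a ≤ 0) (hb : lin α β γ b ≤ 0)
    (hc : 0 < lin α β γ c) (hd : 0 < lin α β γ d) {x : Pt}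
    (h1 : x ∈ segment ℝ a b) (h2 : x ∈ segment ℝ c d) : False := by
  obtain ⟨s, t, hs, ht, hst, he, -, -⟩ := lin_seg (α := α) (β := β) (γ := γ) h1
  obtain ⟨s', t', hs', ht', hst', he', -, -⟩ := lin_seg (α := α) (β := β) (γ := γ) h2
  have hm : 0 < min (lin α β γ c) (lin α β γ d) := lt_min hc hd
  have hc1 : s' * min (lin α β γ c) (lin α β γ d) ≤ s' * lin α β γ c :=
    mul_le_mul_of_nonneg_left (min_le_left _ _) hs'
  have hc2 : t' * min (lin α β γ c) (lin α β γ d) ≤ t' * lin α β γ d :=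
    mul_le_mul_of_nonneg_left (min_le_right _ _) ht'
  nlinarith [mul_nonpos_of_nonneg_of_nonpos hs ha, mul_nonpos_of_nonneg_of_nonpos ht hb]

/-- Separation with single touching points: if `a` is strictly negative, `b,c` on the line
and `d` strictly positive, any common point is `b` and is `c`. -/
lemma sepEq {α β γ : ℝ} {a b c d : Pt} (ha : lin α β γ a < 0) (hb : lin α β γ b = 0)
    (hc : lin α β γ c = 0) (hd : 0 < lin α β γ d) {x : Pt}
    (h1 : x ∈ segment ℝ a b) (h2 : x ∈ segment ℝ c d) : x = b ∧ x = c := by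
  obtain ⟨s, t, hs, ht, hst, he, hx1, hx2⟩ := lin_seg (α := α) (β := β) (γ := γ) h1
  obtain ⟨s', t', hs', ht', hst', he', hx1', hx2'⟩ := lin_seg (α := α) (β := β) (γ := γ) h2
  have hxv : lin α β γ x = 0 := by
    have h0 : lin α β γ x ≤ 0 := by nlinarith [mul_nonpos_of_nonneg_of_nonpos hs ha.le]
    have h0' : 0 ≤ lin α β γ x := by nlinarith [mul_nonneg ht' hd.le]
    linarith
  have hs0 : s = 0 := by
    rcases eq_or_lt_of_le hs with h | h
    · exact h.symm
    · exfalso; nlinarith [mul_pos h (neg_pos.2 ha)]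
  have ht0 : t' = 0 := by
    rcases eq_or_lt_of_le ht' with h | h
    · exact h.symm
    · exfalso; nlinarith [mul_pos h hd]
  have ht1 : t = 1 := by linarith
  have hs1 : s' = 1 := by linarith
  constructor
  · ext <;> simp [hx1, hx2, hs0, ht1]
  · ext <;> simp [hx1', hx2', ht0, hs1]

/-- Two segments sharing the endpoint `p`, with non-collinear other endpoints, meet
only at `p`. -/
lemma shareEndpoint {p q r : Pt} (h : det3 p q r ≠ 0) {x : Pt}
    (h1 : x ∈ segment ℝ p q) (h2 : x ∈ segment ℝ p r) : x = p := by
  obtain ⟨s, t, hs, ht, hst, hx1, hx2⟩ := mem_seg h1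
  obtain ⟨s', t', hs', ht', hst', hx1', hx2'⟩ := mem_seg h2
  -- t • (q - p) = t' • (r - p)
  have e1 : t*(q.1 - p.1) = t'*(r.1 - p.1) := by
    linear_combination hx1' - hx1 + p.1 * hst' - p.1 * hst
  have e2 : t*(q.2 - p.2) = t'*(r.2 - p.2) := by
    linear_combination hx2' - hx2 + p.2 * hst' - p.2 * hst
  have ht0 : t = 0 := by
    have : t * det3 p q r = 0 := by
      simp only [det3]; linear_combination (r.2-p.2)*e1 - (r.1-p.1)*e2
    rcases mul_eq_zero.1 this with h' | h'
    · exact h'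
    · exact absurd h' h
  have : s = 1 := by linarith
  ext <;> simp [hx1, hx2, ht0, this]

lemma det3_ne_of_collinear {p q r : Pt} (h : Collinear ℝ ({p, q, r} : Set Pt)) :
    det3 p q r = 0 := by
  obtain ⟨v, hv⟩ := (collinear_iff_of_mem (Set.mem_insert p {q, r})).1 h
  obtain ⟨tq, hq⟩ := hv q (by simp)
  obtain ⟨tr, hr⟩ := hv r (by simp)
  have hq1 : q.1 = tq * v.1 + p.1 := by rw [hq]; simp [Prod.smul_fst, smul_eq_mul]
  have hq2 : q.2 = tq * v.2 + p.2 := by rw [hq]; simp [Prod.smul_snd, smul_eq_mul]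
  have hr1 : r.1 = tr * v.1 + p.1 := by rw [hr]; simp [Prod.smul_fst, smul_eq_mul]
  have hr2 : r.2 = tr * v.2 + p.2 := by rw [hr]; simp [Prod.smul_snd, smul_eq_mul]
  simp only [det3, hq1, hq2, hr1, hr2]; ring

lemma not_collinear_of_det3 {p q r : Pt} (h : det3 p q r ≠ 0) :
    ¬ Collinear ℝ ({p, q, r} : Set Pt) := fun hc => h (det3_ne_of_collinear hc)

/-- A convex hull of a set contained in a closed halfplane has no interior point on the
bounding line. -/
lemma not_mem_interior_hull {α β γ : ℝ} (hne : α ≠ 0 ∨ β ≠ 0) {C : Set Pt}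
    (hC : ∀ p ∈ C, 0 ≤ lin α β γ p) {z : Pt} (hz : lin α β γ z = 0) :
    z ∉ interior (convexHull ℝ C) := by
  intro hmem
  have hcvx : Convex ℝ {p : Pt | 0 ≤ lin α β γ p} := by
    intro x hx y hy s t hs ht hst
    simp only [Set.mem_setOf_eq, lin] at hx hy ⊢
    have h1 : (s • x + t • y).1 = s*x.1 + t*y.1 := by
      simp [Prod.smul_fst, smul_eq_mul]
    have h2 : (s • x + t • y).2 = s*x.2 + t*y.2 := by
      simp [Prod.smul_snd, smul_eq_mul]
    rw [h1, h2]
    have key : α * (s*x.1+t*y.1) + β*(s*x.2+t*y.2) + γ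
        = s*(α*x.1+β*x.2+γ) + t*(α*y.1+β*y.2+γ) := by linear_combination (-γ) * hst
    rw [key]
    exact add_nonneg (mul_nonneg hs hx) (mul_nonneg ht hy)
  have hsub : convexHull ℝ C ⊆ {p : Pt | 0 ≤ lin α β γ p} :=
    convexHull_min (fun p hp => hC p hp) hcvx
  obtain ⟨ε, hε, hball⟩ := Metric.isOpen_iff.1 isOpen_interior z hmem
  set δ : ℝ := ε / (2 * (|α| + |β| + 1)) with hδdef
  have hden : 0 < |α| + |β| + 1 := by positivity
  have hδ : 0 < δ := by positivity
  set z' : Pt := (z.1 - δ*α, z.2 - δ*β) with hz'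
  have hdist : dist z' z < ε := by
    rw [Prod.dist_eq]
    have d1 : dist z'.1 z.1 = δ * |α| := by
      simp only [hz', Real.dist_eq]
      rw [show z.1 - δ*α - z.1 = -(δ*α) by ring, abs_neg, abs_mul, abs_of_pos hδ]
    have d2 : dist z'.2 z.2 = δ * |β| := by
      simp only [hz', Real.dist_eq]
      rw [show z.2 - δ*β - z.2 = -(δ*β) by ring, abs_neg, abs_mul, abs_of_pos hδ]
    have hδsmall : δ * (|α| + |β| + 1) = ε / 2 := by
      rw [hδdef, div_mul_eq_mul_div, div_eq_iff (by positivity)]; ring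
    have : δ * |α| < ε := by nlinarith [abs_nonneg α, abs_nonneg β, hδ]
    have : δ * |β| < ε := by nlinarith [abs_nonneg α, abs_nonneg β, hδ]
    simp only [d1, d2, max_lt_iff]
    constructor <;> nlinarith [abs_nonneg α, abs_nonneg β, hδ]
  have hz'mem : z' ∈ convexHull ℝ C := interior_subset (hball (Metric.mem_ball.2 hdist))
  have := hsub hz'mem
  simp only [Set.mem_setOf_eq, lin, hz'] at this
  simp only [lin] at hz
  have hsq : 0 < α^2 + β^2 := by
    rcases hne with h | h
    · positivity
    · positivity
  nlinarith [this, hz, mul_pos hδ hsq]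

/-! ### The construction -/

def Pp (a : ℕ) : Pt := ((a:ℝ), (a:ℝ)^2)
def Qq (a : ℕ) : Pt := ((a:ℝ), (a:ℝ)^2 + 1/2)

def Sset (k : ℕ) : Finset Pt :=
  ((Finset.range k).image Pp) ∪ ((Finset.Icc 1 (k-2)).image Qq)

lemma Pp_inj : Function.Injective Pp := by
  intro a b h
  have := congrArg Prod.fst h
  simpa [Pp] using Nat.cast_injective this

lemma Qq_inj : Function.Injective Qq := by
  intro a b h
  have := congrArg Prod.fst h
  simpa [Qq] using Nat.cast_injective this

lemma Pp_ne_Qq (a b : ℕ) : Pp a ≠ Qq b := by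
  intro h
  have h1 := congrArg Prod.fst h
  have h2 := congrArg Prod.snd h
  simp only [Pp, Qq] at h1 h2
  have : (a:ℝ) = b := h1
  rw [this] at h2
  linarith

lemma card_Sset (k : ℕ) (hk : 5 ≤ k) : (Sset k).card = 2*k - 2 := by
  rw [Sset, Finset.card_union_of_disjoint, Finset.card_image_of_injective _ Pp_inj,
    Finset.card_image_of_injective _ Qq_inj, Finset.card_range, Nat.card_Icc]
  · omega
  · rw [Finset.disjoint_left]
    rintro p hp hq
    obtain ⟨a, -, rfl⟩ := Finset.mem_image.1 hp
    obtain ⟨b, -, hb⟩ := Finset.mem_image.1 hq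
    exact Pp_ne_Qq a b hb.symm

lemma mem_Sset_elim {k : ℕ} {p : Pt} (hp : p ∈ Sset k) :
    (∃ a, a ≤ k - 1 ∧ p = Pp a) ∨ (∃ a, 1 ≤ a ∧ a ≤ k - 2 ∧ p = Qq a) := by
  rcases Finset.mem_union.1 hp with h | h
  · obtain ⟨a, ha, rfl⟩ := Finset.mem_image.1 h
    rw [Finset.mem_range] at ha
    exact Or.inl ⟨a, by omega, rfl⟩
  · obtain ⟨a, ha, rfl⟩ := Finset.mem_image.1 h
    rw [Finset.mem_Icc] at ha
    exact Or.inr ⟨a, ha.1, ha.2, rfl⟩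

/-- Integer-parity core of general position on two shifted parabolas. -/
lemma det3_parabola (x1 x2 x3 e1 e2 e3 : ℤ)
    (he1 : e1 = 0 ∨ e1 = 1) (he2 : e2 = 0 ∨ e2 = 1) (he3 : e3 = 0 ∨ e3 = 1)
    (h12 : ¬(x1 = x2 ∧ e1 = e2)) (h13 : ¬(x1 = x3 ∧ e1 = e3))
    (h23 : ¬(x2 = x3 ∧ e2 = e3)) :
    det3 ((x1:ℝ), (x1:ℝ)^2 + e1/2) ((x2:ℝ), (x2:ℝ)^2 + e2/2)
      ((x3:ℝ), (x3:ℝ)^2 + e3/2) ≠ 0 := by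
  set D : ℤ := 2*(x2-x1)*(x3-x1)*(x3-x2) + (x2-x1)*(e3-e1) - (x3-x1)*(e2-e1) with hD
  have hcast : det3 ((x1:ℝ), (x1:ℝ)^2 + e1/2) ((x2:ℝ), (x2:ℝ)^2 + e2/2)
      ((x3:ℝ), (x3:ℝ)^2 + e3/2) = (D:ℝ)/2 := by
    simp only [det3, hD]; push_cast; ring
  rw [hcast]
  have hDne : D ≠ 0 := by
    rcases he1 with rfl | rfl <;> rcases he2 with rfl | rfl <;> rcases he3 with rfl | rfl
    all_goals simp only [hD]
    -- (0,0,0)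
    · have hx12 : x1 ≠ x2 := fun h => h12 ⟨h, rfl⟩
      have hx13 : x1 ≠ x3 := fun h => h13 ⟨h, rfl⟩
      have hx23 : x2 ≠ x3 := fun h => h23 ⟨h, rfl⟩
      intro h
      have h' : (x2-x1)*((x3-x1)*(x3-x2)) = 0 := by linarith [h]
      rcases mul_eq_zero.1 h' with h'' | h''
      · omega
      · rcases mul_eq_zero.1 h'' with h3 | h3 <;> omega
    -- (0,0,1)
    · have hx12 : x1 ≠ x2 := fun h => h12 ⟨h, rfl⟩
      intro h
      have h' : (x2-x1)*(2*((x3-x1)*(x3-x2))+1) = 0 := by linarith [h]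
      rcases mul_eq_zero.1 h' with h'' | h''
      · omega
      · set w := (x3-x1)*(x3-x2); omega
    -- (0,1,0)
    · have hx13 : x1 ≠ x3 := fun h => h13 ⟨h, rfl⟩
      intro h
      have h' : (x3-x1)*(2*((x2-x1)*(x3-x2))-1) = 0 := by linarith [h]
      rcases mul_eq_zero.1 h' with h'' | h''
      · omega
      · set w := (x2-x1)*(x3-x2); omega
    -- (0,1,1)
    · have hx23 : x2 ≠ x3 := fun h => h23 ⟨h, rfl⟩
      intro h
      have h' : (x3-x2)*(2*((x2-x1)*(x3-x1))-1) = 0 := by linarith [h]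
      rcases mul_eq_zero.1 h' with h'' | h''
      · omega
      · set w := (x2-x1)*(x3-x1); omega
    -- (1,0,0)
    · have hx23 : x2 ≠ x3 := fun h => h23 ⟨h, rfl⟩
      intro h
      have h' : (x3-x2)*(2*((x2-x1)*(x3-x1))+1) = 0 := by linarith [h]
      rcases mul_eq_zero.1 h' with h'' | h''
      · omega
      · set w := (x2-x1)*(x3-x1); omega
    -- (1,0,1)
    · have hx13 : x1 ≠ x3 := fun h => h13 ⟨h, rfl⟩
      intro h
      have h' : (x3-x1)*(2*((x2-x1)*(x3-x2))+1) = 0 := by linarith [h]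
      rcases mul_eq_zero.1 h' with h'' | h''
      · omega
      · set w := (x2-x1)*(x3-x2); omega
    -- (1,1,0)
    · have hx12 : x1 ≠ x2 := fun h => h12 ⟨h, rfl⟩
      intro h
      have h' : (x2-x1)*(2*((x3-x1)*(x3-x2))-1) = 0 := by linarith [h]
      rcases mul_eq_zero.1 h' with h'' | h''
      · omega
      · set w := (x3-x1)*(x3-x2); omega
    -- (1,1,1)
    · have hx12 : x1 ≠ x2 := fun h => h12 ⟨h, rfl⟩
      have hx13 : x1 ≠ x3 := fun h => h13 ⟨h, rfl⟩
      have hx23 : x2 ≠ x3 := fun h => h23 ⟨h, rfl⟩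
      intro h
      have h' : (x2-x1)*((x3-x1)*(x3-x2)) = 0 := by linarith [h]
      rcases mul_eq_zero.1 h' with h'' | h''
      · omega
      · rcases mul_eq_zero.1 h'' with h3 | h3 <;> omega
  intro h
  apply hDne
  have : (D:ℝ) = 0 := by linarith [h]
  exact_mod_cast this

/-- Every point of `Sset` has the two-parabola shape. -/
lemma Sset_shape {k : ℕ} {p : Pt} (hp : p ∈ Sset k) :
    ∃ (x e : ℤ), 0 ≤ x ∧ (e = 0 ∨ e = 1) ∧ p = ((x:ℝ), (x:ℝ)^2 + e/2) := by
  rcases mem_Sset_elim hp with ⟨a, -, rfl⟩ | ⟨a, -, -, rfl⟩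
  · exact ⟨a, 0, by positivity, Or.inl rfl, by simp [Pp]⟩
  · exact ⟨a, 1, by positivity, Or.inr rfl, by norm_num [Qq]⟩

lemma det3_Sset {k : ℕ} {p q r : Pt} (hp : p ∈ Sset k) (hq : q ∈ Sset k)
    (hr : r ∈ Sset k) (hpq : p ≠ q) (hpr : p ≠ r) (hqr : q ≠ r) :
    det3 p q r ≠ 0 := by
  obtain ⟨x1, e1, -, he1, rfl⟩ := Sset_shape hp
  obtain ⟨x2, e2, -, he2, rfl⟩ := Sset_shape hq
  obtain ⟨x3, e3, -, he3, rfl⟩ := Sset_shape hr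
  apply det3_parabola x1 x2 x3 e1 e2 e3 he1 he2 he3
  · rintro ⟨h1, h2⟩; exact hpq (by rw [h1, h2])
  · rintro ⟨h1, h2⟩; exact hpr (by rw [h1, h2])
  · rintro ⟨h1, h2⟩; exact hqr (by rw [h1, h2])

/-! ### Edge set of the triangulation -/

def Ted (k : ℕ) : Finset (Sym2 Pt) :=
  ((Finset.Icc 1 (k-1)).image (fun a => s(Pp 0, Pp a))) ∪
  ((Finset.Icc 1 (k-2)).image (fun a => s(Pp a, Pp (a+1)))) ∪
  ((Finset.Icc 1 (k-2)).image (fun a => s(Qq a, Pp 0))) ∪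
  ((Finset.Icc 1 (k-2)).image (fun a => s(Qq a, Pp a))) ∪
  ((Finset.Icc 1 (k-2)).image (fun a => s(Qq a, Pp (a+1))))

lemma mem_Ted_elim {k : ℕ} {e : Sym2 Pt} (he : e ∈ Ted k) :
    (∃ a, 1 ≤ a ∧ a ≤ k-1 ∧ e = s(Pp 0, Pp a)) ∨
    (∃ a, 1 ≤ a ∧ a ≤ k-2 ∧ e = s(Pp a, Pp (a+1))) ∨
    (∃ a, 1 ≤ a ∧ a ≤ k-2 ∧ e = s(Qq a, Pp 0)) ∨
    (∃ a, 1 ≤ a ∧ a ≤ k-2 ∧ e = s(Qq a, Pp a)) ∨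
    (∃ a, 1 ≤ a ∧ a ≤ k-2 ∧ e = s(Qq a, Pp (a+1))) := by
  simp only [Ted, Finset.mem_union, Finset.mem_image, Finset.mem_Icc] at he
  rcases he with ((((⟨a,⟨h1,h2⟩,h3⟩|⟨a,⟨h1,h2⟩,h3⟩)|⟨a,⟨h1,h2⟩,h3⟩)|⟨a,⟨h1,h2⟩,h3⟩)|⟨a,⟨h1,h2⟩,h3⟩)
  · exact Or.inl ⟨a, h1, h2, h3.symm⟩
  · exact Or.inr (Or.inl ⟨a, h1, h2, h3.symm⟩)
  · exact Or.inr (Or.inr (Or.inl ⟨a, h1, h2, h3.symm⟩))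
  · exact Or.inr (Or.inr (Or.inr (Or.inl ⟨a, h1, h2, h3.symm⟩)))
  · exact Or.inr (Or.inr (Or.inr (Or.inr ⟨a, h1, h2, h3.symm⟩)))

lemma PpS {k a : ℕ} (h : a < k) : Pp a ∈ Sset k :=
  Finset.mem_union_left _ (Finset.mem_image_of_mem _ (Finset.mem_range.2 h))

lemma QqS {k a : ℕ} (h1 : 1 ≤ a) (h2 : a ≤ k-2) : Qq a ∈ Sset k :=
  Finset.mem_union_right _ (Finset.mem_image_of_mem _ (Finset.mem_Icc.2 ⟨h1,h2⟩))

lemma Pp_ne {a b : ℕ} (h : a ≠ b) : Pp a ≠ Pp b := fun he => h (Pp_inj he)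
lemma Qq_ne {a b : ℕ} (h : a ≠ b) : Qq a ≠ Qq b := fun he => h (Qq_inj he)
lemma Qq_ne_Pp (a b : ℕ) : Qq a ≠ Pp b := (Pp_ne_Qq b a).symm

lemma share_case {k : ℕ} {p q r x : Pt} (hp : p ∈ Sset k) (hq : q ∈ Sset k)
    (hr : r ∈ Sset k) (hpq : p ≠ q) (hpr : p ≠ r) (hqr : q ≠ r)
    (h1 : x ∈ segment ℝ p q) (h2 : x ∈ segment ℝ p r) : x = p :=
  shareEndpoint (det3_Sset hp hq hr hpq hpr hqr) h1 h2

lemma consec_nonneg (u v : ℕ) : 0 ≤ ((u:ℝ) - v) * ((u:ℝ) - v - 1) := by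
  rcases le_total u v with h | h
  · have : (u:ℝ) ≤ v := by exact_mod_cast h
    nlinarith
  · rcases Nat.eq_or_lt_of_le h with h' | h'
    · subst h'; nlinarith
    · have : (v:ℝ) + 1 ≤ u := by exact_mod_cast h'
      nlinarith

lemma consec_pos (u v : ℕ) (h1 : u ≠ v) (h2 : u ≠ v + 1) :
    0 < ((u:ℝ) - v) * ((u:ℝ) - v - 1) := by
  rcases Nat.lt_trichotomy u v with h | h | h
  · have : (u:ℝ) + 1 ≤ v := by exact_mod_cast h
    nlinarith
  · exact absurd h h1
  · have h3 : v + 2 ≤ u := by omega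
    have : (v:ℝ) + 2 ≤ u := by exact_mod_cast h3
    nlinarith

/-- Non-crossing pair property. -/
def NCP (e₁ e₂ : Sym2 Pt) : Prop :=
  ∀ x : Pt, x ∈ seg2 e₁ → x ∈ seg2 e₂ → x ∈ e₁ ∧ x ∈ e₂

lemma NCP.symm {e₁ e₂ : Sym2 Pt} (h : NCP e₁ e₂) : NCP e₂ e₁ :=
  fun x h1 h2 => (h x h2 h1).symm
section NC
variable {k : ℕ}

lemma nc11 (hk : 5 ≤ k) {a b : ℕ} (ha1 : 1 ≤ a) (ha2 : a ≤ k-1)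
    (hb1 : 1 ≤ b) (hb2 : b ≤ k-1) (hab : a ≠ b) :
    NCP s(Pp 0, Pp a) s(Pp 0, Pp b) := by
  intro x h1 h2
  simp only [seg2_mk] at h1 h2
  have hx : x = Pp 0 := share_case (k := k) (PpS (by omega)) (PpS (by omega))
    (PpS (by omega)) (Pp_ne (by omega)) (Pp_ne (by omega)) (Pp_ne hab) h1 h2
  subst hx
  exact ⟨Sym2.mem_mk_left _ _, Sym2.mem_mk_left _ _⟩

lemma nc12 (hk : 5 ≤ k) {a b : ℕ} (ha1 : 1 ≤ a) (ha2 : a ≤ k-1)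
    (hb1 : 1 ≤ b) (hb2 : b ≤ k-2) :
    NCP s(Pp 0, Pp a) s(Pp b, Pp (b+1)) := by
  intro x h1 h2
  simp only [seg2_mk] at h1 h2
  rcases eq_or_ne a b with rfl | hab
  · rw [segment_symm] at h1
    have hx : x = Pp a := share_case (k := k) (PpS (by omega)) (PpS (by omega))
      (PpS (by omega)) (Pp_ne (by omega)) (Pp_ne (by omega)) (Pp_ne (by omega)) h1 h2
    subst hx
    exact ⟨Sym2.mem_mk_right _ _, Sym2.mem_mk_left _ _⟩
  rcases eq_or_ne a (b+1) with rfl | hab2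
  · rw [segment_symm] at h1 h2
    have hx : x = Pp (b+1) := share_case (k := k) (PpS (by omega)) (PpS (by omega))
      (PpS (by omega)) (Pp_ne (by omega)) (Pp_ne (by omega)) (Pp_ne (by omega)) h1 h2
    subst hx
    exact ⟨Sym2.mem_mk_right _ _, Sym2.mem_mk_right _ _⟩
  · have hb1R : (1:ℝ) ≤ b := by exact_mod_cast hb1
    refine (sep0 (α := -(2*(b:ℝ)+1)) (β := 1) (γ := (b:ℝ)*((b:ℝ)+1)) ?_ ?_ ?_ ?_ h2 h1).elim
    · simp only [lin, Pp]; push_cast; nlinarith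
    · simp only [lin, Pp]; push_cast; nlinarith
    · simp only [lin, Pp]; push_cast; nlinarith
    · simp only [lin, Pp]; push_cast; nlinarith [consec_pos a b hab hab2]

lemma nc13 (hk : 5 ≤ k) {a b : ℕ} (ha1 : 1 ≤ a) (ha2 : a ≤ k-1)
    (hb1 : 1 ≤ b) (hb2 : b ≤ k-2) :
    NCP s(Pp 0, Pp a) s(Qq b, Pp 0) := by
  intro x h1 h2
  simp only [seg2_mk] at h1 h2
  rw [segment_symm] at h2
  have hx : x = Pp 0 := share_case (k := k) (PpS (by omega)) (PpS (by omega))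
    (QqS hb1 hb2) (Pp_ne (by omega)) (Pp_ne_Qq 0 b) (Pp_ne_Qq a b).symm.symm h1 h2
  subst hx
  exact ⟨Sym2.mem_mk_left _ _, Sym2.mem_mk_right _ _⟩

lemma nc14 (hk : 5 ≤ k) {a b : ℕ} (ha1 : 1 ≤ a) (ha2 : a ≤ k-1)
    (hb1 : 1 ≤ b) (hb2 : b ≤ k-2) :
    NCP s(Pp 0, Pp a) s(Qq b, Pp b) := by
  intro x h1 h2
  simp only [seg2_mk] at h1 h2
  rcases eq_or_ne a b with rfl | hab
  · rw [segment_symm] at h1 h2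
    have hx : x = Pp a := share_case (k := k) (PpS (by omega)) (PpS (by omega))
      (QqS hb1 hb2) (Pp_ne (by omega)) (Pp_ne_Qq a a) (Pp_ne_Qq 0 a) h1 h2
    subst hx
    exact ⟨Sym2.mem_mk_right _ _, Sym2.mem_mk_right _ _⟩
  · have hb1R : (1:ℝ) ≤ b := by exact_mod_cast hb1
    rcases Nat.lt_trichotomy a b with h | h | h
    · have haR : (a:ℝ) + 1 ≤ b := by exact_mod_cast h
      refine (sep0 (α := -(a:ℝ)) (β := 1) (γ := 0) ?_ ?_ ?_ ?_ h1 h2).elim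
      · simp only [lin, Pp]; push_cast; nlinarith
      · simp only [lin, Pp]; push_cast; nlinarith
      · simp only [lin, Qq]; push_cast; nlinarith
      · simp only [lin, Pp]; push_cast; nlinarith
    · exact absurd h hab
    · have haR : (b:ℝ) + 1 ≤ a := by exact_mod_cast h
      refine (sep0 (α := (a:ℝ)) (β := -1) (γ := 0) ?_ ?_ ?_ ?_ h1 h2).elim
      · simp only [lin, Pp]; push_cast; nlinarith
      · simp only [lin, Pp]; push_cast; nlinarith
      · simp only [lin, Qq]; push_cast; nlinarith
      · simp only [lin, Pp]; push_cast; nlinarith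

lemma nc15 (hk : 5 ≤ k) {a b : ℕ} (ha1 : 1 ≤ a) (ha2 : a ≤ k-1)
    (hb1 : 1 ≤ b) (hb2 : b ≤ k-2) :
    NCP s(Pp 0, Pp a) s(Qq b, Pp (b+1)) := by
  intro x h1 h2
  simp only [seg2_mk] at h1 h2
  rcases eq_or_ne a (b+1) with rfl | hab
  · rw [segment_symm] at h1 h2
    have hx : x = Pp (b+1) := share_case (k := k) (PpS (by omega)) (PpS (by omega))
      (QqS hb1 hb2) (Pp_ne (by omega)) (Pp_ne_Qq (b+1) b) (Pp_ne_Qq 0 b) h1 h2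
    subst hx
    exact ⟨Sym2.mem_mk_right _ _, Sym2.mem_mk_right _ _⟩
  · have hb1R : (1:ℝ) ≤ b := by exact_mod_cast hb1
    have ha1R : (1:ℝ) ≤ a := by exact_mod_cast ha1
    rcases le_or_gt a b with h | h
    · have haR : (a:ℝ) ≤ b := by exact_mod_cast h
      refine (sep0 (α := -(a:ℝ)) (β := 1) (γ := 0) ?_ ?_ ?_ ?_ h1 h2).elim
      · simp only [lin, Pp]; push_cast; nlinarith
      · simp only [lin, Pp]; push_cast; nlinarith
      · simp only [lin, Qq]; push_cast; nlinarith
      · simp only [lin, Pp]; push_cast; nlinarith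
    · have hba : b + 2 ≤ a := by omega
      have haR : (b:ℝ) + 2 ≤ a := by exact_mod_cast hba
      refine (sep0 (α := (a:ℝ)) (β := -1) (γ := 0) ?_ ?_ ?_ ?_ h1 h2).elim
      · simp only [lin, Pp]; push_cast; nlinarith
      · simp only [lin, Pp]; push_cast; nlinarith
      · simp only [lin, Qq]; push_cast; nlinarith
      · simp only [lin, Pp]; push_cast; nlinarith

end NC
section NC2
variable {k : ℕ}

lemma nc22 (hk : 5 ≤ k) {a b : ℕ} (ha1 : 1 ≤ a) (ha2 : a ≤ k-2)
    (hb1 : 1 ≤ b) (hb2 : b ≤ k-2) (hab : a ≠ b) :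
    NCP s(Pp a, Pp (a+1)) s(Pp b, Pp (b+1)) := by
  intro x h1 h2
  simp only [seg2_mk] at h1 h2
  rcases eq_or_ne b (a+1) with rfl | hb'
  · rw [segment_symm] at h1
    have hx : x = Pp (a+1) := share_case (k := k) (PpS (by omega)) (PpS (by omega))
      (PpS (by omega)) (Pp_ne (by omega)) (Pp_ne (by omega)) (Pp_ne (by omega)) h1 h2
    subst hx
    exact ⟨Sym2.mem_mk_right _ _, Sym2.mem_mk_left _ _⟩
  rcases eq_or_ne a (b+1) with rfl | ha'
  · rw [segment_symm] at h2
    have hx : x = Pp (b+1) := share_case (k := k) (PpS (by omega)) (PpS (by omega))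
      (PpS (by omega)) (Pp_ne (by omega)) (Pp_ne (by omega)) (Pp_ne (by omega)) h1 h2
    subst hx
    exact ⟨Sym2.mem_mk_left _ _, Sym2.mem_mk_right _ _⟩
  · refine (sep0 (α := -(2*(a:ℝ)+1)) (β := 1) (γ := (a:ℝ)*((a:ℝ)+1)) ?_ ?_ ?_ ?_ h1 h2).elim
    · simp only [lin, Pp]; push_cast; nlinarith
    · simp only [lin, Pp]; push_cast; nlinarith
    · simp only [lin, Pp]; push_cast; nlinarith [consec_pos b a (Ne.symm hab) hb']
    · have hc := consec_pos (b+1) a (fun h => ha' h.symm) (by omega : b+1 ≠ a+1)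
      push_cast at hc
      simp only [lin, Pp]; push_cast; nlinarith [hc]

lemma nc23 (hk : 5 ≤ k) {a b : ℕ} (ha1 : 1 ≤ a) (ha2 : a ≤ k-2)
    (hb1 : 1 ≤ b) (hb2 : b ≤ k-2) :
    NCP s(Pp a, Pp (a+1)) s(Qq b, Pp 0) := by
  intro x h1 h2
  simp only [seg2_mk] at h1 h2
  have ha1R : (1:ℝ) ≤ a := by exact_mod_cast ha1
  refine (sep0 (α := -(2*(a:ℝ)+1)) (β := 1) (γ := (a:ℝ)*((a:ℝ)+1)) ?_ ?_ ?_ ?_ h1 h2).elim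
  · simp only [lin, Pp]; push_cast; nlinarith
  · simp only [lin, Pp]; push_cast; nlinarith
  · simp only [lin, Qq]; push_cast; nlinarith [consec_nonneg b a]
  · simp only [lin, Pp]; push_cast; nlinarith

lemma nc24 (hk : 5 ≤ k) {a b : ℕ} (ha1 : 1 ≤ a) (ha2 : a ≤ k-2)
    (hb1 : 1 ≤ b) (hb2 : b ≤ k-2) :
    NCP s(Pp a, Pp (a+1)) s(Qq b, Pp b) := by
  intro x h1 h2
  simp only [seg2_mk] at h1 h2
  rcases eq_or_ne a b with rfl | hab
  · rw [segment_symm] at h2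
    have hx : x = Pp a := share_case (k := k) (PpS (by omega)) (PpS (by omega))
      (QqS hb1 hb2) (Pp_ne (by omega)) (Pp_ne_Qq a a) (Pp_ne_Qq (a+1) a) h1 h2
    subst hx
    exact ⟨Sym2.mem_mk_left _ _, Sym2.mem_mk_right _ _⟩
  rcases eq_or_ne b (a+1) with rfl | hb'
  · rw [segment_symm] at h1 h2
    have hx : x = Pp (a+1) := share_case (k := k) (PpS (by omega)) (PpS (by omega))
      (QqS hb1 hb2) (Pp_ne (by omega)) (Pp_ne_Qq (a+1) (a+1)) (Pp_ne_Qq a (a+1)) h1 h2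
    subst hx
    exact ⟨Sym2.mem_mk_right _ _, Sym2.mem_mk_right _ _⟩
  · refine (sep0 (α := -(2*(a:ℝ)+1)) (β := 1) (γ := (a:ℝ)*((a:ℝ)+1)) ?_ ?_ ?_ ?_ h1 h2).elim
    · simp only [lin, Pp]; push_cast; nlinarith
    · simp only [lin, Pp]; push_cast; nlinarith
    · simp only [lin, Qq]; push_cast; nlinarith [consec_nonneg b a]
    · simp only [lin, Pp]; push_cast; nlinarith [consec_pos b a (Ne.symm hab) hb']

lemma nc25 (hk : 5 ≤ k) {a b : ℕ} (ha1 : 1 ≤ a) (ha2 : a ≤ k-2)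
    (hb1 : 1 ≤ b) (hb2 : b ≤ k-2) :
    NCP s(Pp a, Pp (a+1)) s(Qq b, Pp (b+1)) := by
  intro x h1 h2
  simp only [seg2_mk] at h1 h2
  rcases eq_or_ne a (b+1) with rfl | ha'
  · rw [segment_symm] at h2
    have hx : x = Pp (b+1) := share_case (k := k) (PpS (by omega)) (PpS (by omega))
      (QqS hb1 hb2) (Pp_ne (by omega)) (Pp_ne_Qq (b+1) b) (Pp_ne_Qq (b+1+1) b) h1 h2
    subst hx
    exact ⟨Sym2.mem_mk_left _ _, Sym2.mem_mk_right _ _⟩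
  rcases eq_or_ne b a with rfl | hb'
  · rw [segment_symm] at h1 h2
    have hx : x = Pp (b+1) := share_case (k := k) (PpS (by omega)) (PpS (by omega))
      (QqS hb1 hb2) (Pp_ne (by omega)) (Pp_ne_Qq (b+1) b) (Pp_ne_Qq b b) h1 h2
    subst hx
    exact ⟨Sym2.mem_mk_right _ _, Sym2.mem_mk_right _ _⟩
  · refine (sep0 (α := -(2*(a:ℝ)+1)) (β := 1) (γ := (a:ℝ)*((a:ℝ)+1)) ?_ ?_ ?_ ?_ h1 h2).elim
    · simp only [lin, Pp]; push_cast; nlinarith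
    · simp only [lin, Pp]; push_cast; nlinarith
    · simp only [lin, Qq]; push_cast; nlinarith [consec_nonneg b a]
    · have hc := consec_pos (b+1) a (fun h => ha' h.symm) (by omega : b+1 ≠ a+1)
      push_cast at hc
      simp only [lin, Pp]; push_cast; nlinarith [hc]

lemma nc33 (hk : 5 ≤ k) {a b : ℕ} (ha1 : 1 ≤ a) (ha2 : a ≤ k-2)
    (hb1 : 1 ≤ b) (hb2 : b ≤ k-2) (hab : a ≠ b) :
    NCP s(Qq a, Pp 0) s(Qq b, Pp 0) := by
  intro x h1 h2
  simp only [seg2_mk] at h1 h2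
  rw [segment_symm] at h1 h2
  have hx : x = Pp 0 := share_case (k := k) (PpS (by omega)) (QqS ha1 ha2)
    (QqS hb1 hb2) (Pp_ne_Qq 0 a) (Pp_ne_Qq 0 b) (Qq_ne hab) h1 h2
  subst hx
  exact ⟨Sym2.mem_mk_right _ _, Sym2.mem_mk_right _ _⟩

lemma nc34 (hk : 5 ≤ k) {a b : ℕ} (ha1 : 1 ≤ a) (ha2 : a ≤ k-2)
    (hb1 : 1 ≤ b) (hb2 : b ≤ k-2) :
    NCP s(Qq a, Pp 0) s(Qq b, Pp b) := by
  intro x h1 h2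
  simp only [seg2_mk] at h1 h2
  have ha1R : (1:ℝ) ≤ a := by exact_mod_cast ha1
  have hb1R : (1:ℝ) ≤ b := by exact_mod_cast hb1
  rcases eq_or_ne a b with rfl | hab
  · have hx : x = Qq a := share_case (k := k) (QqS ha1 ha2) (PpS (by omega))
      (PpS (by omega)) (Qq_ne_Pp a 0) (Qq_ne_Pp a a) (Pp_ne (by omega)) h1 h2
    subst hx
    exact ⟨Sym2.mem_mk_left _ _, Sym2.mem_mk_left _ _⟩
  rcases Nat.lt_trichotomy a b with h | h | h
  · have hR : (a:ℝ) + 1 ≤ b := by exact_mod_cast h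
    refine (sep0 (α := 1) (β := 0) (γ := -(((a:ℝ)+b)/2)) ?_ ?_ ?_ ?_ h1 h2).elim
    · simp only [lin, Qq]; push_cast; nlinarith
    · simp only [lin, Pp]; push_cast; nlinarith
    · simp only [lin, Qq]; push_cast; nlinarith
    · simp only [lin, Pp]; push_cast; nlinarith
  · exact absurd h hab
  · have hR : (b:ℝ) + 1 ≤ a := by exact_mod_cast h
    have hkey : (0:ℝ) < ((a:ℝ) - b) * (2*(a:ℝ)*b - 1) :=
      mul_pos (by linarith) (by nlinarith)
    refine (sep0 (α := 2*(a:ℝ)^2+1) (β := -(2*(a:ℝ))) (γ := 0) ?_ ?_ ?_ ?_ h1 h2).elim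
    · simp only [lin, Qq]; push_cast; nlinarith
    · simp only [lin, Pp]; push_cast; nlinarith
    · simp only [lin, Qq]; push_cast; nlinarith
    · simp only [lin, Pp]; push_cast; nlinarith

lemma nc35 (hk : 5 ≤ k) {a b : ℕ} (ha1 : 1 ≤ a) (ha2 : a ≤ k-2)
    (hb1 : 1 ≤ b) (hb2 : b ≤ k-2) :
    NCP s(Qq a, Pp 0) s(Qq b, Pp (b+1)) := by
  intro x h1 h2
  simp only [seg2_mk] at h1 h2
  have ha1R : (1:ℝ) ≤ a := by exact_mod_cast ha1
  have hb1R : (1:ℝ) ≤ b := by exact_mod_cast hb1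
  rcases eq_or_ne a b with rfl | hab
  · have hx : x = Qq a := share_case (k := k) (QqS ha1 ha2) (PpS (by omega))
      (PpS (by omega)) (Qq_ne_Pp a 0) (Qq_ne_Pp a (a+1)) (Pp_ne (by omega)) h1 h2
    subst hx
    exact ⟨Sym2.mem_mk_left _ _, Sym2.mem_mk_left _ _⟩
  rcases Nat.lt_trichotomy a b with h | h | h
  · have hR : (a:ℝ) + 1 ≤ b := by exact_mod_cast h
    refine (sep0 (α := 1) (β := 0) (γ := -(((a:ℝ)+b)/2)) ?_ ?_ ?_ ?_ h1 h2).elim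
    · simp only [lin, Qq]; push_cast; nlinarith
    · simp only [lin, Pp]; push_cast; nlinarith
    · simp only [lin, Qq]; push_cast; nlinarith
    · simp only [lin, Pp]; push_cast; nlinarith
  · exact absurd h hab
  · have hR : (b:ℝ) + 1 ≤ a := by exact_mod_cast h
    have hkey : (0:ℝ) < ((a:ℝ) - b) * (2*(a:ℝ)*b - 1) :=
      mul_pos (by linarith) (by nlinarith)
    have hkey2 : (0:ℝ) ≤ 2*(a:ℝ)*((a:ℝ)-b-1) :=
      mul_nonneg (by positivity) (by linarith)
    refine (sep0 (α := 2*(a:ℝ)^2+1) (β := -(2*(a:ℝ))) (γ := 0) ?_ ?_ ?_ ?_ h1 h2).elim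
    · simp only [lin, Qq]; push_cast; nlinarith
    · simp only [lin, Pp]; push_cast; nlinarith
    · simp only [lin, Qq]; push_cast; nlinarith
    · simp only [lin, Pp]; push_cast; nlinarith

lemma nc44 (hk : 5 ≤ k) {a b : ℕ} (ha1 : 1 ≤ a) (ha2 : a ≤ k-2)
    (hb1 : 1 ≤ b) (hb2 : b ≤ k-2) (hab : a < b) :
    NCP s(Qq a, Pp a) s(Qq b, Pp b) := by
  intro x h1 h2
  simp only [seg2_mk] at h1 h2
  have hR : (a:ℝ) + 1 ≤ b := by exact_mod_cast hab
  refine (sep0 (α := 1) (β := 0) (γ := -(((a:ℝ)+b)/2)) ?_ ?_ ?_ ?_ h1 h2).elim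
  · simp only [lin, Qq]; push_cast; nlinarith
  · simp only [lin, Pp]; push_cast; nlinarith
  · simp only [lin, Qq]; push_cast; nlinarith
  · simp only [lin, Pp]; push_cast; nlinarith

lemma nc45 (hk : 5 ≤ k) {a b : ℕ} (ha1 : 1 ≤ a) (ha2 : a ≤ k-2)
    (hb1 : 1 ≤ b) (hb2 : b ≤ k-2) :
    NCP s(Qq a, Pp a) s(Qq b, Pp (b+1)) := by
  intro x h1 h2
  simp only [seg2_mk] at h1 h2
  have ha1R : (1:ℝ) ≤ a := by exact_mod_cast ha1
  have hb1R : (1:ℝ) ≤ b := by exact_mod_cast hb1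
  rcases eq_or_ne a b with rfl | hab
  · have hx : x = Qq a := share_case (k := k) (QqS ha1 ha2) (PpS (by omega))
      (PpS (by omega)) (Qq_ne_Pp a a) (Qq_ne_Pp a (a+1)) (Pp_ne (by omega)) h1 h2
    subst hx
    exact ⟨Sym2.mem_mk_left _ _, Sym2.mem_mk_left _ _⟩
  rcases eq_or_ne a (b+1) with rfl | ha'
  · rw [segment_symm] at h1 h2
    have hx : x = Pp (b+1) := share_case (k := k) (PpS (by omega)) (QqS ha1 ha2)
      (QqS hb1 hb2) (Pp_ne_Qq (b+1) (b+1)) (Pp_ne_Qq (b+1) b) (Qq_ne (by omega)) h1 h2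
    subst hx
    exact ⟨Sym2.mem_mk_right _ _, Sym2.mem_mk_right _ _⟩
  rcases Nat.lt_trichotomy a b with h | h | h
  · have hR : (a:ℝ) + 1 ≤ b := by exact_mod_cast h
    refine (sep0 (α := 1) (β := 0) (γ := -(((a:ℝ)+b)/2)) ?_ ?_ ?_ ?_ h1 h2).elim
    · simp only [lin, Qq]; push_cast; nlinarith
    · simp only [lin, Pp]; push_cast; nlinarith
    · simp only [lin, Qq]; push_cast; nlinarith
    · simp only [lin, Pp]; push_cast; nlinarith
  · exact absurd h hab
  · have h2a : b + 2 ≤ a := by omega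
    have hR : (b:ℝ) + 2 ≤ a := by exact_mod_cast h2a
    refine (sep0 (α := -1) (β := 0) (γ := ((a:ℝ)+b+1)/2) ?_ ?_ ?_ ?_ h1 h2).elim
    · simp only [lin, Qq]; push_cast; nlinarith
    · simp only [lin, Pp]; push_cast; nlinarith
    · simp only [lin, Qq]; push_cast; nlinarith
    · simp only [lin, Pp]; push_cast; nlinarith

lemma nc55 (hk : 5 ≤ k) {a b : ℕ} (ha1 : 1 ≤ a) (ha2 : a ≤ k-2)
    (hb1 : 1 ≤ b) (hb2 : b ≤ k-2) (hab : a < b) :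
    NCP s(Qq a, Pp (a+1)) s(Qq b, Pp (b+1)) := by
  intro x h1 h2
  simp only [seg2_mk] at h1 h2
  have ha1R : (1:ℝ) ≤ a := by exact_mod_cast ha1
  have hb1R : (1:ℝ) ≤ b := by exact_mod_cast hb1
  rcases eq_or_ne b (a+1) with rfl | hb'
  · refine (sep0 (α := -((a:ℝ)+1)) (β := 1) (γ := 0) ?_ ?_ ?_ ?_ h1 h2).elim
    · simp only [lin, Qq]; push_cast; nlinarith
    · simp only [lin, Pp]; push_cast; nlinarith
    · simp only [lin, Qq]; push_cast; nlinarith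
    · simp only [lin, Pp]; push_cast; nlinarith
  · have hb2a : a + 2 ≤ b := by omega
    have hR : (a:ℝ) + 2 ≤ b := by exact_mod_cast hb2a
    refine (sep0 (α := 1) (β := 0) (γ := -(((a:ℝ)+1+b)/2)) ?_ ?_ ?_ ?_ h1 h2).elim
    · simp only [lin, Qq]; push_cast; nlinarith
    · simp only [lin, Pp]; push_cast; nlinarith
    · simp only [lin, Qq]; push_cast; nlinarith
    · simp only [lin, Pp]; push_cast; nlinarith

end NC2


/-! ### The triangulation as a plane graph -/

lemma Ted_noncross (k : ℕ) (hk : 5 ≤ k) :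
    ∀ e₁ ∈ Ted k, ∀ e₂ ∈ Ted k, e₁ ≠ e₂ → ∀ x ∈ seg2 e₁ ∩ seg2 e₂, x ∈ e₁ ∧ x ∈ e₂ := by
  intro e₁ he₁ e₂ he₂ hne x hx
  obtain ⟨hx1, hx2⟩ := hx
  rcases mem_Ted_elim he₁ with ⟨a,ha1,ha2,rfl⟩|⟨a,ha1,ha2,rfl⟩|⟨a,ha1,ha2,rfl⟩|⟨a,ha1,ha2,rfl⟩|⟨a,ha1,ha2,rfl⟩ <;>
    rcases mem_Ted_elim he₂ with ⟨b,hb1,hb2,rfl⟩|⟨b,hb1,hb2,rfl⟩|⟨b,hb1,hb2,rfl⟩|⟨b,hb1,hb2,rfl⟩|⟨b,hb1,hb2,rfl⟩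
  · rcases eq_or_ne a b with rfl | hab
    · exact absurd rfl hne
    · exact nc11 hk ha1 ha2 hb1 hb2 hab x hx1 hx2
  · exact nc12 hk ha1 ha2 hb1 hb2 x hx1 hx2
  · exact nc13 hk ha1 ha2 hb1 hb2 x hx1 hx2
  · exact nc14 hk ha1 ha2 hb1 hb2 x hx1 hx2
  · exact nc15 hk ha1 ha2 hb1 hb2 x hx1 hx2
  · exact (nc12 hk hb1 hb2 ha1 ha2).symm x hx1 hx2
  · rcases eq_or_ne a b with rfl | hab
    · exact absurd rfl hne
    · exact nc22 hk ha1 ha2 hb1 hb2 hab x hx1 hx2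
  · exact nc23 hk ha1 ha2 hb1 hb2 x hx1 hx2
  · exact nc24 hk ha1 ha2 hb1 hb2 x hx1 hx2
  · exact nc25 hk ha1 ha2 hb1 hb2 x hx1 hx2
  · exact (nc13 hk hb1 hb2 ha1 ha2).symm x hx1 hx2
  · exact (nc23 hk hb1 hb2 ha1 ha2).symm x hx1 hx2
  · rcases eq_or_ne a b with rfl | hab
    · exact absurd rfl hne
    · exact nc33 hk ha1 ha2 hb1 hb2 hab x hx1 hx2
  · exact nc34 hk ha1 ha2 hb1 hb2 x hx1 hx2
  · exact nc35 hk ha1 ha2 hb1 hb2 x hx1 hx2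
  · exact (nc14 hk hb1 hb2 ha1 ha2).symm x hx1 hx2
  · exact (nc24 hk hb1 hb2 ha1 ha2).symm x hx1 hx2
  · exact (nc34 hk hb1 hb2 ha1 ha2).symm x hx1 hx2
  · rcases eq_or_ne a b with rfl | hab
    · exact absurd rfl hne
    · rcases lt_or_gt_of_ne hab with h | h
      · exact nc44 hk ha1 ha2 hb1 hb2 h x hx1 hx2
      · exact (nc44 hk hb1 hb2 ha1 ha2 h).symm x hx1 hx2
  · exact nc45 hk ha1 ha2 hb1 hb2 x hx1 hx2
  · exact (nc15 hk hb1 hb2 ha1 ha2).symm x hx1 hx2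
  · exact (nc25 hk hb1 hb2 ha1 ha2).symm x hx1 hx2
  · exact (nc35 hk hb1 hb2 ha1 ha2).symm x hx1 hx2
  · exact (nc45 hk hb1 hb2 ha1 ha2).symm x hx1 hx2
  · rcases eq_or_ne a b with rfl | hab
    · exact absurd rfl hne
    · rcases lt_or_gt_of_ne hab with h | h
      · exact nc55 hk ha1 ha2 hb1 hb2 h x hx1 hx2
      · exact (nc55 hk hb1 hb2 ha1 ha2 h).symm x hx1 hx2

def Tgraph (k : ℕ) (hk : 5 ≤ k) : PlaneGraph (Sset k) where
  edges := Ted k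
  endpoint_mem := by
    intro e he p hp
    rcases mem_Ted_elim he with ⟨a,ha1,ha2,rfl⟩|⟨a,ha1,ha2,rfl⟩|⟨a,ha1,ha2,rfl⟩|⟨a,ha1,ha2,rfl⟩|⟨a,ha1,ha2,rfl⟩ <;>
      rcases Sym2.mem_iff.1 hp with rfl | rfl
    · exact PpS (by omega)
    · exact PpS (by omega)
    · exact PpS (by omega)
    · exact PpS (by omega)
    · exact QqS ha1 ha2
    · exact PpS (by omega)
    · exact QqS ha1 ha2
    · exact PpS (by omega)
    · exact QqS ha1 ha2
    · exact PpS (by omega)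
  not_isDiag := by
    intro e he
    rcases mem_Ted_elim he with ⟨a,ha1,ha2,rfl⟩|⟨a,ha1,ha2,rfl⟩|⟨a,ha1,ha2,rfl⟩|⟨a,ha1,ha2,rfl⟩|⟨a,ha1,ha2,rfl⟩ <;>
      rw [Sym2.mk_isDiag_iff]
    · exact Pp_ne (by omega)
    · exact Pp_ne (by omega)
    · exact Qq_ne_Pp a 0
    · exact Qq_ne_Pp a a
    · exact Qq_ne_Pp a (a+1)
  noncrossing := Ted_noncross k hk


/-! ### Maximality: the graph is a triangulation -/

lemma spoke_mem {k a : ℕ} (h1 : 1 ≤ a) (h2 : a ≤ k-1) : s(Pp 0, Pp a) ∈ Ted k := by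
  simp only [Ted, Finset.mem_union, Finset.mem_image, Finset.mem_Icc]
  exact Or.inl (Or.inl (Or.inl (Or.inl ⟨a, ⟨h1,h2⟩, rfl⟩)))

lemma chain_mem {k a : ℕ} (h1 : 1 ≤ a) (h2 : a ≤ k-2) : s(Pp a, Pp (a+1)) ∈ Ted k := by
  simp only [Ted, Finset.mem_union, Finset.mem_image, Finset.mem_Icc]
  exact Or.inl (Or.inl (Or.inl (Or.inr ⟨a, ⟨h1,h2⟩, rfl⟩)))

lemma g1_mem {k a : ℕ} (h1 : 1 ≤ a) (h2 : a ≤ k-2) : s(Qq a, Pp 0) ∈ Ted k := by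
  simp only [Ted, Finset.mem_union, Finset.mem_image, Finset.mem_Icc]
  exact Or.inl (Or.inl (Or.inr ⟨a, ⟨h1,h2⟩, rfl⟩))

lemma g2_mem {k a : ℕ} (h1 : 1 ≤ a) (h2 : a ≤ k-2) : s(Qq a, Pp a) ∈ Ted k := by
  simp only [Ted, Finset.mem_union, Finset.mem_image, Finset.mem_Icc]
  exact Or.inl (Or.inr ⟨a, ⟨h1,h2⟩, rfl⟩)

lemma g3_mem {k a : ℕ} (h1 : 1 ≤ a) (h2 : a ≤ k-2) : s(Qq a, Pp (a+1)) ∈ Ted k := by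
  simp only [Ted, Finset.mem_union, Finset.mem_image, Finset.mem_Icc]
  exact Or.inr ⟨a, ⟨h1,h2⟩, rfl⟩

/-- A segment with endpoints strictly on either side of the line of the spoke `P0–Pc`,
crossing within the open spoke, yields a proper crossing point. -/
lemma cross_spoke {c : ℕ} {A B : Pt}
    (hA : A.2 - c*A.1 < 0) (hB : 0 < B.2 - c*B.1)
    (h1 : 0 < (B.2 - c*B.1)*A.1 - (A.2 - c*A.1)*B.1)
    (h2 : (B.2 - c*B.1)*A.1 - (A.2 - c*A.1)*B.1 < c*((B.2 - c*B.1) - (A.2 - c*A.1))) :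
    ∃ z : Pt, z ∈ segment ℝ A B ∧ z ∈ segment ℝ (Pp 0) (Pp c) ∧ z ≠ A ∧ z ≠ B := by
  have hDpos : (0:ℝ) < (B.2 - c*B.1) - (A.2 - c*A.1) := by linarith
  set D : ℝ := (B.2 - c*B.1) - (A.2 - c*A.1) with hD
  set l : ℝ := -(A.2 - c*A.1) / D with hl
  have hl0 : 0 < l := div_pos (by linarith) hDpos
  have hl1 : l < 1 := (div_lt_one hDpos).2 (by linarith)
  set X : ℝ := (1-l)*A.1 + l*B.1 with hX
  set Y : ℝ := (1-l)*A.2 + l*B.2 with hY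
  have hfz : Y - c*X = 0 := by
    have hexp : Y - c*X = (A.2 - c*A.1) + l * D := by rw [hX, hY, hD]; ring
    rw [hexp, hl]; field_simp; ring
  have hzx : X * D = (B.2 - c*B.1)*A.1 - (A.2 - c*A.1)*B.1 := by
    have hlD : l * D = -(A.2 - c*A.1) := by rw [hl]; exact div_mul_cancel₀ _ hDpos.ne'
    rw [hX]; linear_combination (B.1 - A.1) * hlD + A.1 * hD
  have hx0 : 0 < X := by
    have h' : 0 * D < X * D := by rw [zero_mul, hzx]; exact h1
    exact lt_of_mul_lt_mul_right h' hDpos.le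
  have hxc : X < (c:ℝ) := by
    have h' : X * D < (c:ℝ) * D := by rw [hzx]; exact h2
    exact lt_of_mul_lt_mul_right h' hDpos.le
  have hc0 : (0:ℝ) < c := hx0.trans hxc
  refine ⟨(X, Y), seg_mem' (by linarith) hl0.le (by ring), ?_, ?_, ?_⟩
  · have hzeq : ((X:ℝ), Y) = ((1 - X/c)*(Pp 0).1 + (X/c)*(Pp c).1,
        (1 - X/c)*(Pp 0).2 + (X/c)*(Pp c).2) := by
      have hYX : Y = c*X := by linarith
      simp only [Pp, Prod.mk.injEq]
      push_cast
      constructor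
      · field_simp; ring
      · rw [hYX]; field_simp; ring
    rw [hzeq]
    exact seg_mem' (by rw [sub_nonneg, div_le_one hc0]; exact hxc.le)
      (div_nonneg hx0.le hc0.le) (by ring)
  · intro h
    have := congrArg (fun p : Pt => p.2 - (c:ℝ)*p.1) h
    simp only at this
    rw [hfz] at this
    linarith [this.symm ▸ hA]
  · intro h
    have := congrArg (fun p : Pt => p.2 - (c:ℝ)*p.1) h
    simp only at this
    rw [hfz] at this
    linarith [this.symm ▸ hB]

lemma crossing_kills {k : ℕ} (G : PlaneGraph (Sset k)) (hsub : Ted k ⊆ G.edges)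
    {A B : Pt} (hAB : s(A,B) ∈ G.edges) (hne : s(A,B) ∉ Ted k)
    {c : ℕ} (hc : s(Pp 0, Pp c) ∈ Ted k)
    (hz : ∃ z, z ∈ segment ℝ A B ∧ z ∈ segment ℝ (Pp 0) (Pp c) ∧ z ≠ A ∧ z ≠ B) : False := by
  obtain ⟨z, hz1, hz2, hzA, hzB⟩ := hz
  have hnee : s(A,B) ≠ s(Pp 0, Pp c) := fun h => hne (h ▸ hc)
  have hmem := G.noncrossing _ hAB _ (hsub hc) hnee z
    ⟨by simpa [seg2_mk] using hz1, by simpa [seg2_mk] using hz2⟩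
  rcases Sym2.mem_iff.1 hmem.1 with h | h
  · exact hzA h
  · exact hzB h

set_option maxHeartbeats 800000 in
lemma ppcase {k : ℕ} (hk : 5 ≤ k) (G : PlaneGraph (Sset k)) (hsub : Ted k ⊆ G.edges)
    {i j : ℕ} (hi1 : 1 ≤ i) (hij : i + 2 ≤ j) (hj : j ≤ k - 1)
    (he : s(Pp i, Pp j) ∈ G.edges) (hne : s(Pp i, Pp j) ∉ Ted k) : False := by
  have hiR : (1:ℝ) ≤ i := by exact_mod_cast hi1
  have hijR : (i:ℝ) + 2 ≤ j := by exact_mod_cast hij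
  apply crossing_kills G hsub he hne (spoke_mem (a := i+1) (by omega) (by omega))
  apply cross_spoke (c := i+1) (A := Pp i) (B := Pp j)
  · simp only [Pp]; push_cast; nlinarith
  · simp only [Pp]; push_cast; nlinarith
  · have key : (0:ℝ) < i*j*((j:ℝ)-i) :=
      mul_pos (mul_pos (by linarith) (by linarith)) (by linarith)
    simp only [Pp]; push_cast; nlinarith [key]
  · have key : (0:ℝ) < ((j:ℝ)-i)*((j:ℝ)-i-1) :=
      mul_pos (by linarith) (by linarith)
    simp only [Pp]; push_cast; nlinarith [key]

set_option maxHeartbeats 1600000 in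
lemma qcase {k : ℕ} (hk : 5 ≤ k) (G : PlaneGraph (Sset k)) (hsub : Ted k ⊆ G.edges)
    {a : ℕ} (ha1 : 1 ≤ a) (ha2 : a ≤ k-2) {v : Pt} (hv : v ∈ Sset k)
    (hvne : v ≠ Qq a) (hv0 : v ≠ Pp 0) (hva : v ≠ Pp a) (hva1 : v ≠ Pp (a+1))
    (he : s(Qq a, v) ∈ G.edges) (hne : s(Qq a, v) ∉ Ted k) : False := by
  have ha1R : (1:ℝ) ≤ a := by exact_mod_cast ha1
  have he' : s(v, Qq a) ∈ G.edges := by rwa [Sym2.eq_swap]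
  have hne' : s(v, Qq a) ∉ Ted k := by rwa [Sym2.eq_swap]
  rcases mem_Sset_elim hv with ⟨w, hw, rfl⟩ | ⟨w, hw1, hw2, rfl⟩
  · -- v = Pp w
    have hw0 : w ≠ 0 := fun h => hv0 (by rw [h])
    have hwa : w ≠ a := fun h => hva (by rw [h])
    have hwa1 : w ≠ a + 1 := fun h => hva1 (by rw [h])
    have hw1R : (1:ℝ) ≤ w := by
      have : 1 ≤ w := by omega
      exact_mod_cast this
    rcases Nat.lt_trichotomy w a with h | h | h
    · -- w < a : cross spoke a
      have hR : (w:ℝ) + 1 ≤ a := by exact_mod_cast h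
      apply crossing_kills G hsub he' hne' (spoke_mem (a := a) ha1 (by omega))
      apply cross_spoke (c := a) (A := Pp w) (B := Qq a)
      · simp only [Pp]; push_cast; nlinarith
      · simp only [Qq]; push_cast; nlinarith
      · have key : (0:ℝ) ≤ w*a*((a:ℝ)-w) :=
          mul_nonneg (mul_nonneg (by linarith) (by linarith)) (by linarith)
        simp only [Pp, Qq]; push_cast; nlinarith [key]
      · simp only [Pp, Qq]; push_cast; nlinarith
    · exact absurd h hwa
    · -- w > a, w ≠ a+1 so w ≥ a+2 : cross spoke a+1
      have hw2a : a + 2 ≤ w := by omega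
      have hR : (a:ℝ) + 2 ≤ w := by exact_mod_cast hw2a
      apply crossing_kills G hsub he hne (spoke_mem (a := a+1) (by omega) (by omega))
      apply cross_spoke (c := a+1) (A := Qq a) (B := Pp w)
      · simp only [Qq]; push_cast; nlinarith
      · simp only [Pp]; push_cast; nlinarith
      · have key : (0:ℝ) < ((w:ℝ)*((w:ℝ)-a-1))*a :=
          mul_pos (mul_pos (by linarith) (by linarith)) (by linarith)
        simp only [Pp, Qq]; push_cast; nlinarith [key]
      · have key : (0:ℝ) < ((w:ℝ)-a+1/2)*((w:ℝ)-a-1) :=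
          mul_pos (by linarith) (by linarith)
        simp only [Pp, Qq]; push_cast; nlinarith [key]
  · -- v = Qq w
    have hwa : w ≠ a := fun h => hvne (by rw [h])
    have hw1R : (1:ℝ) ≤ w := by exact_mod_cast hw1
    rcases Nat.lt_trichotomy w a with h | h | h
    · -- w < a : cross spoke a
      have hR : (w:ℝ) + 1 ≤ a := by exact_mod_cast h
      apply crossing_kills G hsub he' hne' (spoke_mem (a := a) ha1 (by omega))
      apply cross_spoke (c := a) (A := Qq w) (B := Qq a)
      · simp only [Qq]; push_cast; nlinarith
      · simp only [Qq]; push_cast; nlinarith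
      · have key : (0:ℝ) ≤ (w*((a:ℝ)-w) - 1/2)*a :=
          mul_nonneg (by nlinarith) (by linarith)
        simp only [Qq]; push_cast; nlinarith [key]
      · simp only [Qq]; push_cast; nlinarith
    · exact absurd h hwa
    · rcases eq_or_ne w (a+1) with rfl | hwa1
      · -- w = a+1 : cross spoke a+1
        apply crossing_kills G hsub he hne (spoke_mem (a := a+1) (by omega) (by omega))
        apply cross_spoke (c := a+1) (A := Qq a) (B := Qq (a+1))
        · simp only [Qq]; push_cast; nlinarith
        · simp only [Qq]; push_cast; nlinarith
        · simp only [Qq]; push_cast; nlinarith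
        · simp only [Qq]; push_cast; nlinarith
      · -- w ≥ a+2 : cross spoke a+1
        have hw2a : a + 2 ≤ w := by omega
        have hR : (a:ℝ) + 2 ≤ w := by exact_mod_cast hw2a
        apply crossing_kills G hsub he hne (spoke_mem (a := a+1) (by omega) (by omega))
        apply cross_spoke (c := a+1) (A := Qq a) (B := Qq w)
        · simp only [Qq]; push_cast; nlinarith
        · simp only [Qq]; push_cast; nlinarith
        · have key : (0:ℝ) < ((w:ℝ)*((w:ℝ)-a-1)+1/2)*a :=
            mul_pos (by nlinarith) (by linarith)
          simp only [Qq]; push_cast; nlinarith [key]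
        · have key : (0:ℝ) < ((w:ℝ)-a+1/2)*((w:ℝ)-a-1) :=
            mul_pos (by linarith) (by linarith)
          simp only [Qq]; push_cast; nlinarith [key]

set_option maxHeartbeats 800000 in
lemma Ted_max {k : ℕ} (hk : 5 ≤ k) : IsTriangulation (Tgraph k hk) := by
  intro G hsub
  refine Finset.Subset.antisymm ?_ hsub
  intro e he
  by_contra hne
  rw [show (Tgraph k hk).edges = Ted k from rfl] at hne
  induction e using Sym2.ind with
  | _ u v =>
  have hu : u ∈ Sset k := G.endpoint_mem _ he u (Sym2.mem_mk_left _ _)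
  have hv : v ∈ Sset k := G.endpoint_mem _ he v (Sym2.mem_mk_right _ _)
  have huv : u ≠ v := by
    have := G.not_isDiag _ he
    rwa [Sym2.mk_isDiag_iff] at this
  have hsub' : Ted k ⊆ G.edges := by
    rw [show (Tgraph k hk).edges = Ted k from rfl] at hsub; exact hsub
  rcases mem_Sset_elim hu with ⟨i, hik, rfl⟩ | ⟨i, hi1, hi2, rfl⟩ <;>
    rcases mem_Sset_elim hv with ⟨j, hjk, rfl⟩ | ⟨j, hj1, hj2, rfl⟩
  · -- P i, P j
    have hij : i ≠ j := fun h => huv (by rw [h])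
    rcases Nat.lt_trichotomy i j with h | h | h
    · rcases Nat.eq_zero_or_pos i with rfl | hi1
      · exact hne (spoke_mem (by omega) hjk)
      · rcases eq_or_ne j (i+1) with rfl | hj'
        · exact hne (chain_mem (by omega) (by omega))
        · exact ppcase hk G hsub' (by omega) (by omega) hjk he hne
    · exact absurd h hij
    · have he2 : s(Pp j, Pp i) ∈ G.edges := by rwa [Sym2.eq_swap]
      have hne2 : s(Pp j, Pp i) ∉ Ted k := by rwa [Sym2.eq_swap]
      rcases Nat.eq_zero_or_pos j with rfl | hj1
      · exact hne2 (spoke_mem (by omega) hik)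
      · rcases eq_or_ne i (j+1) with rfl | hi'
        · exact hne2 (chain_mem (by omega) (by omega))
        · exact ppcase hk G hsub' (by omega) (by omega) hik he2 hne2
  · -- P i, Q j
    have he2 : s(Qq j, Pp i) ∈ G.edges := by rwa [Sym2.eq_swap]
    have hne2 : s(Qq j, Pp i) ∉ Ted k := by rwa [Sym2.eq_swap]
    rcases Nat.eq_zero_or_pos i with rfl | hi1
    · exact hne2 (g1_mem hj1 hj2)
    · rcases eq_or_ne i j with rfl | hij
      · exact hne2 (g2_mem hj1 hj2)
      · rcases eq_or_ne i (j+1) with rfl | hij1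
        · exact hne2 (g3_mem hj1 hj2)
        · exact qcase hk G hsub' hj1 hj2 hu (Pp_ne_Qq i j)
            (Pp_ne (by omega)) (Pp_ne hij) (Pp_ne hij1) he2 hne2
  · -- Q i, P j
    rcases Nat.eq_zero_or_pos j with rfl | hj1'
    · exact hne (g1_mem hi1 hi2)
    · rcases eq_or_ne j i with rfl | hij
      · exact hne (g2_mem hi1 hi2)
      · rcases eq_or_ne j (i+1) with rfl | hij1
        · exact hne (g3_mem hi1 hi2)
        · exact qcase hk G hsub' hi1 hi2 hv (Pp_ne_Qq j i)
            (Pp_ne (by omega)) (Pp_ne hij) (Pp_ne hij1) he hne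
  · -- Q i, Q j
    have hij : i ≠ j := fun h => huv (by rw [h])
    exact qcase hk G hsub' hi1 hi2 hv (Qq_ne hij.symm)
      (Qq_ne_Pp j 0) (Qq_ne_Pp j i) (Qq_ne_Pp j (i+1)) he hne


/-! ### General position, supporting edges -/

lemma genpos_Sset (k : ℕ) : GenPos (Sset k) := fun p hp q hq r hr hpq hpr hqr =>
  not_collinear_of_det3 (det3_Sset hp hq hr hpq hpr hqr)

lemma convex_halfplane (α β γ : ℝ) : Convex ℝ {p : Pt | 0 ≤ lin α β γ p} := by
  intro x hx y hy s t hs ht hst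
  simp only [Set.mem_setOf_eq, lin] at hx hy ⊢
  have h1 : (s • x + t • y).1 = s*x.1 + t*y.1 := by simp [Prod.smul_fst, smul_eq_mul]
  have h2 : (s • x + t • y).2 = s*x.2 + t*y.2 := by simp [Prod.smul_snd, smul_eq_mul]
  rw [h1, h2]
  have key : α * (s*x.1+t*y.1) + β*(s*x.2+t*y.2) + γ
      = s*(α*x.1+β*x.2+γ) + t*(α*y.1+β*y.2+γ) := by linear_combination (-γ) * hst
  rw [key]
  exact add_nonneg (mul_nonneg hs hx) (mul_nonneg ht hy)

lemma lin_combo {α β γ : ℝ} {u v' : Pt} {s t : ℝ} (hst : s + t = 1) :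
    lin α β γ (s • u + t • v') = s * lin α β γ u + t * lin α β γ v' := by
  simp only [lin, Prod.fst_add, Prod.snd_add, Prod.smul_fst, Prod.smul_snd, smul_eq_mul]
  linear_combination (-γ) * hst

lemma support_edge {Q : Finset Pt} {v w : Pt} (hv : v ∈ Q) (hw : w ∈ Q) (hvw : v ≠ w)
    {α β γ : ℝ} (hab : α ≠ 0 ∨ β ≠ 0) (h0v : lin α β γ v = 0) (h0w : lin α β γ w = 0)
    (hneg : ∀ y ∈ Q, lin α β γ y ≤ 0) : IsHullEdgeOf Q v w := by
  refine ⟨hv, hw, hvw, ?_⟩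
  intro z hz
  have hzQ : z ∈ convexHull ℝ (Q : Set Pt) :=
    segment_subset_convexHull (Finset.mem_coe.2 hv) (Finset.mem_coe.2 hw) hz
  have hz0 : lin α β γ z = 0 := by
    obtain ⟨s, t, hs, ht, hst, rfl⟩ := hz
    rw [lin_combo hst, h0v, h0w]; ring
  have hclosed : IsClosed (convexHull ℝ (Q : Set Pt)) :=
    (Q.finite_toSet.isCompact_convexHull ℝ).isClosed
  rw [← closure_diff_interior]
  refine ⟨by rwa [hclosed.closure_eq], ?_⟩
  refine not_mem_interior_hull (α := -α) (β := -β) (γ := -γ) ?_ ?_ ?_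
  · rcases hab with h | h
    exacts [Or.inl (neg_ne_zero.2 h), Or.inr (neg_ne_zero.2 h)]
  · intro p hp
    have := hneg p (Finset.mem_coe.1 hp)
    simp only [lin] at this ⊢; linarith
  · simp only [lin] at hz0 ⊢; linarith

lemma det3_lin (p q z : Pt) :
    det3 p q z = lin (-(q.2-p.2)) (q.1-p.1) ((q.2-p.2)*p.1 - (q.1-p.1)*p.2) z := by
  simp only [det3, lin]; ring

set_option maxHeartbeats 1000000 in
lemma hull_two_nbrs {k : ℕ} {Q : Finset Pt} (hQs : (Q : Set Pt) ⊆ (Sset k : Set Pt))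
    (hcard : 3 ≤ Q.card) (hconv : InConvexPosition Q) {v : Pt} (hv : v ∈ Q) :
    ∃ r ∈ Q, ∃ s' ∈ Q, r ≠ s' ∧ r ≠ v ∧ s' ≠ v ∧
      IsHullEdgeOf Q v r ∧ IsHullEdgeOf Q v s' := by
  classical
  have hvS : v ∈ Sset k := hQs hv
  have hQS : ∀ y ∈ Q, y ∈ Sset k := fun y hy => hQs hy
  have hvnot : v ∉ convexHull ℝ ((Q.erase v : Finset Pt) : Set Pt) := hconv v hv
  have hclosed : IsClosed (convexHull ℝ ((Q.erase v : Finset Pt) : Set Pt)) :=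
    ((Q.erase v).finite_toSet.isCompact_convexHull ℝ).isClosed
  obtain ⟨f, u, hfv, hfy⟩ :=
    geometric_hahn_banach_point_closed (convex_convexHull ℝ _) hclosed hvnot
  set A : ℝ := f ((1:ℝ), (0:ℝ)) with hA
  set B : ℝ := f ((0:ℝ), (1:ℝ)) with hB
  have hf : ∀ z : Pt, f z = A * z.1 + B * z.2 := by
    intro z
    have hzd : z = z.1 • ((1:ℝ),(0:ℝ)) + z.2 • ((0:ℝ),(1:ℝ)) := by
      ext <;> simp
    conv_lhs => rw [hzd]
    rw [map_add, map_smul, map_smul, smul_eq_mul, smul_eq_mul, hA, hB]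
    ring
  have hden : ∀ y ∈ Q.erase v, 0 < A*(y.1 - v.1) + B*(y.2 - v.2) := by
    intro y hy
    have h1 : u < f y := hfy y (subset_convexHull ℝ _ hy)
    have e1 := hf y
    have e2 := hf v
    nlinarith [h1, hfv]
  have hne : (Q.erase v).Nonempty := by
    rw [← Finset.card_pos, Finset.card_erase_of_mem hv]; omega
  obtain ⟨r, hr, hrmax⟩ := Finset.exists_max_image (Q.erase v)
    (fun y => (-B*(y.1 - v.1) + A*(y.2 - v.2)) / (A*(y.1 - v.1) + B*(y.2 - v.2))) hne
  obtain ⟨s', hs', hsmin⟩ := Finset.exists_min_image (Q.erase v)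
    (fun y => (-B*(y.1 - v.1) + A*(y.2 - v.2)) / (A*(y.1 - v.1) + B*(y.2 - v.2))) hne
  have hrv : r ≠ v := (Finset.mem_erase.1 hr).1
  have hsv : s' ≠ v := (Finset.mem_erase.1 hs').1
  have hrQ : r ∈ Q := (Finset.mem_erase.1 hr).2
  have hsQ : s' ∈ Q := (Finset.mem_erase.1 hs').2
  have hABpos : 0 < A^2 + B^2 := by
    rcases eq_or_ne A 0 with hA0 | hA0
    · rcases eq_or_ne B 0 with hB0 | hB0
      · exfalso
        have := hden r hr
        rw [hA0, hB0] at this; linarith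
      · positivity
    · positivity
  -- supporting sign facts
  have hr_supp : ∀ y ∈ Q, y ≠ v → y ≠ r → det3 v r y < 0 := by
    intro y hy hyv hyr
    have hy' : y ∈ Q.erase v := Finset.mem_erase.2 ⟨hyv, hy⟩
    have hdet_ne : det3 v r y ≠ 0 :=
      det3_Sset hvS (hQS r hrQ) (hQS y hy) (Ne.symm hrv) (Ne.symm hyv) (Ne.symm hyr)
    have hφ := hrmax y hy'
    have hcmp := (div_le_div_iff₀ (hden y hy') (hden r hr)).1 hφ
    have hid : (A^2+B^2) * det3 v r y =
        (A*(r.1 - v.1) + B*(r.2 - v.2)) * (-B*(y.1 - v.1) + A*(y.2 - v.2))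
        - (A*(y.1 - v.1) + B*(y.2 - v.2)) * (-B*(r.1 - v.1) + A*(r.2 - v.2)) := by
      simp only [det3]; ring
    have hle : det3 v r y ≤ 0 := by nlinarith [hid, hcmp, hABpos]
    exact lt_of_le_of_ne hle hdet_ne
  have hs_supp : ∀ y ∈ Q, y ≠ v → y ≠ s' → 0 < det3 v s' y := by
    intro y hy hyv hys
    have hy' : y ∈ Q.erase v := Finset.mem_erase.2 ⟨hyv, hy⟩
    have hdet_ne : det3 v s' y ≠ 0 :=
      det3_Sset hvS (hQS s' hsQ) (hQS y hy) (Ne.symm hsv) (Ne.symm hyv) (Ne.symm hys)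
    have hφ := hsmin y hy'
    have hcmp := (div_le_div_iff₀ (hden s' hs') (hden y hy')).1 hφ
    have hid : (A^2+B^2) * det3 v s' y =
        (A*(s'.1 - v.1) + B*(s'.2 - v.2)) * (-B*(y.1 - v.1) + A*(y.2 - v.2))
        - (A*(y.1 - v.1) + B*(y.2 - v.2)) * (-B*(s'.1 - v.1) + A*(s'.2 - v.2)) := by
      simp only [det3]; ring
    have hge : 0 ≤ det3 v s' y := by nlinarith [hid, hcmp, hABpos]
    exact lt_of_le_of_ne hge (Ne.symm hdet_ne)
  have hrs : r ≠ s' := by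
    intro h
    subst h
    have h2 : 1 < (Q.erase v).card := by rw [Finset.card_erase_of_mem hv]; omega
    obtain ⟨y, hy, hyr⟩ := Finset.exists_mem_ne h2 r
    have hyv : y ≠ v := (Finset.mem_erase.1 hy).1
    have hyQ : y ∈ Q := (Finset.mem_erase.1 hy).2
    exact absurd (hr_supp y hyQ hyv hyr) (not_lt.2 (hs_supp y hyQ hyv hyr).le)
  have hcoef_r : ¬((-(r.2 - v.2)) = 0 ∧ (r.1 - v.1) = 0) := by
    rintro ⟨h1, h2⟩
    apply hrv
    have : r.2 = v.2 := by linarith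
    have h1' : r.1 = v.1 := by linarith
    exact Prod.ext h1' this
  have hcoef_s : ¬((s'.2 - v.2) = 0 ∧ (-(s'.1 - v.1)) = 0) := by
    rintro ⟨h1, h2⟩
    apply hsv
    have : s'.2 = v.2 := by linarith
    have h1' : s'.1 = v.1 := by linarith
    exact Prod.ext h1' this
  refine ⟨r, hrQ, s', hsQ, hrs, hrv, hsv, ?_, ?_⟩
  · refine support_edge hv hrQ (Ne.symm hrv) (α := -(r.2-v.2)) (β := r.1-v.1)
      (γ := (r.2-v.2)*v.1 - (r.1-v.1)*v.2) ?_ ?_ ?_ ?_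
    · by_contra h
      push_neg at h
      exact hcoef_r h
    · rw [← det3_lin]; simp only [det3]; ring
    · rw [← det3_lin]; simp only [det3]; ring
    · intro y hy
      rw [← det3_lin]
      rcases eq_or_ne y v with rfl | hyv
      · simp only [det3]; nlinarith [sq_nonneg (0:ℝ)]
      · rcases eq_or_ne y r with rfl | hyr
        · simp only [det3]; nlinarith [sq_nonneg (0:ℝ)]
        · exact (hr_supp y hy hyv hyr).le
  · refine support_edge hv hsQ (Ne.symm hsv) (α := (s'.2-v.2)) (β := -(s'.1-v.1))
      (γ := -((s'.2-v.2)*v.1 - (s'.1-v.1)*v.2)) ?_ ?_ ?_ ?_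
    · by_contra h
      push_neg at h
      exact hcoef_s h
    · have : lin (s'.2-v.2) (-(s'.1-v.1)) (-((s'.2-v.2)*v.1 - (s'.1-v.1)*v.2)) v
          = -(det3 v s' v) := by rw [det3_lin v s']; simp only [lin]; ring
      rw [this]; simp only [det3]; ring
    · have : lin (s'.2-v.2) (-(s'.1-v.1)) (-((s'.2-v.2)*v.1 - (s'.1-v.1)*v.2)) s'
          = -(det3 v s' s') := by rw [det3_lin v s']; simp only [lin]; ring
      rw [this]; simp only [det3]; ring
    · intro y hy
      have hfl : lin (s'.2-v.2) (-(s'.1-v.1)) (-((s'.2-v.2)*v.1 - (s'.1-v.1)*v.2)) y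
          = -(det3 v s' y) := by rw [det3_lin v s']; simp only [lin]; ring
      rw [hfl]
      rcases eq_or_ne y v with rfl | hyv
      · simp only [det3]; nlinarith [sq_nonneg (0:ℝ)]
      · rcases eq_or_ne y s' with rfl | hys
        · simp only [det3]; nlinarith [sq_nonneg (0:ℝ)]
        · linarith [hs_supp y hy hyv hys]


/-! ### Eliminating non-spoke edges from ps-flippable sets -/

lemma no_diag_on_support {k : ℕ} {α β γ : ℝ} (hne : α ≠ 0 ∨ β ≠ 0)
    (hS : ∀ p ∈ Sset k, 0 ≤ lin α β γ p)
    {u' v' : Pt} (hu0 : lin α β γ u' = 0) (hv0 : lin α β γ v' = 0)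
    {Q : Finset Pt} (hQs : (Q : Set Pt) ⊆ (Sset k : Set Pt))
    (hdiag : IsDiagonalOf Q s(u', v')) : False := by
  obtain ⟨p, hp, q, hq, heq, hop⟩ := hdiag
  have hseg : openSegment ℝ u' v' ⊆ interior (convexHull ℝ (Q : Set Pt)) := by
    rcases Sym2.eq_iff.1 heq with ⟨e1, e2⟩ | ⟨e1, e2⟩
    · rw [e1, e2]; exact hop
    · rw [e1, e2, openSegment_symm]; exact hop
  have hmid : (1/2:ℝ) • u' + (1/2:ℝ) • v' ∈ openSegment ℝ u' v' :=
    ⟨1/2, 1/2, by norm_num, by norm_num, by norm_num, rfl⟩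
  have hz := hseg hmid
  have hz0 : lin α β γ ((1/2:ℝ) • u' + (1/2:ℝ) • v') = 0 := by
    rw [lin_combo (by norm_num), hu0, hv0]; ring
  exact not_mem_interior_hull hne (fun p' hp' => hS p' (hQs hp')) hz0 hz

lemma hS_tan (k a : ℕ) : ∀ p ∈ Sset k, 0 ≤ lin (-(2*(a:ℝ)+1)) 1 ((a:ℝ)*((a:ℝ)+1)) p := by
  intro p hp
  rcases mem_Sset_elim hp with ⟨w, hw, rfl⟩ | ⟨w, hw1, hw2, rfl⟩
  · simp only [lin, Pp]; push_cast; nlinarith [consec_nonneg w a]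
  · simp only [lin, Qq]; push_cast; nlinarith [consec_nonneg w a]

lemma hS_top (k : ℕ) (hk : 5 ≤ k) : ∀ p ∈ Sset k, 0 ≤ lin ((k:ℝ)-1) (-1) 0 p := by
  intro p hp
  rcases mem_Sset_elim hp with ⟨w, hw, rfl⟩ | ⟨w, hw1, hw2, rfl⟩
  · have hwR : (w:ℝ) ≤ (k:ℝ)-1 := by
      have h' : (w:ℝ) ≤ ((k-1:ℕ):ℝ) := by exact_mod_cast hw
      rwa [Nat.cast_sub (by omega), Nat.cast_one] at h'
    simp only [lin, Pp]; push_cast; nlinarith [Nat.cast_nonneg (α := ℝ) w]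
  · have h1 : (1:ℝ) ≤ w := by exact_mod_cast hw1
    have h2 : (w:ℝ) ≤ (k:ℝ)-2 := by
      have h' : (w:ℝ) ≤ ((k-2:ℕ):ℝ) := by exact_mod_cast hw2
      rwa [Nat.cast_sub (by omega), Nat.cast_ofNat] at h'
    simp only [lin, Qq]; push_cast; nlinarith

lemma diag_unpack {Q : Finset Pt} {u' v' : Pt} (h : IsDiagonalOf Q s(u', v')) :
    u' ∈ Q ∧ v' ∈ Q ∧ openSegment ℝ u' v' ⊆ interior (convexHull ℝ (Q : Set Pt)) := by
  obtain ⟨p, hp, q, hq, heq, hop⟩ := h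
  rcases Sym2.eq_iff.1 heq with ⟨e1, e2⟩ | ⟨e1, e2⟩
  · rw [← e1] at hp; rw [← e2] at hq
    refine ⟨hp, hq, ?_⟩; rw [e1, e2]; exact hop
  · rw [← e1] at hq; rw [← e2] at hp
    refine ⟨hq, hp, ?_⟩; rw [e1, e2, openSegment_symm]; exact hop

lemma Ted_at_Qq {k a : ℕ} {w : Pt} (h : s(Qq a, w) ∈ Ted k) :
    w = Pp 0 ∨ w = Pp a ∨ w = Pp (a+1) := by
  rcases mem_Ted_elim h with ⟨b,h1,h2,he⟩|⟨b,h1,h2,he⟩|⟨b,h1,h2,he⟩|⟨b,h1,h2,he⟩|⟨b,h1,h2,he⟩ <;>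
    rcases Sym2.eq_iff.1 he with ⟨e1, e2⟩ | ⟨e1, e2⟩
  · exact absurd e1 (Qq_ne_Pp a 0)
  · exact absurd e1 (Qq_ne_Pp a b)
  · exact absurd e1 (Qq_ne_Pp a b)
  · exact absurd e1 (Qq_ne_Pp a (b+1))
  · obtain rfl := Qq_inj e1; exact Or.inl e2
  · exact absurd e1 (Qq_ne_Pp a 0)
  · obtain rfl := Qq_inj e1; exact Or.inr (Or.inl e2)
  · exact absurd e1 (Qq_ne_Pp a b)
  · obtain rfl := Qq_inj e1; exact Or.inr (Or.inr e2)
  · exact absurd e1 (Qq_ne_Pp a (b+1))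

lemma Qa_mem_hull {a : ℕ} (ha : 1 ≤ a) :
    Qq a ∈ convexHull ℝ ({Pp 0, Pp a, Pp (a+1)} : Set Pt) := by
  have haR : (1:ℝ) ≤ a := by exact_mod_cast ha
  have hsum : (0:ℝ) < 1 + (2*(a:ℝ)-1)*((a:ℝ)+1) + a := by nlinarith
  have hsum' : (1:ℝ) + (2*(a:ℝ)-1)*((a:ℝ)+1) + a = 2*(a:ℝ)*((a:ℝ)+1) := by ring
  have hmem := Finset.centerMass_mem_convexHull (t := (Finset.univ : Finset (Fin 3)))
    (w := ![1, (2*(a:ℝ)-1)*((a:ℝ)+1), (a:ℝ)])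
    (s := ({Pp 0, Pp a, Pp (a+1)} : Set Pt))
    (z := ![Pp 0, Pp a, Pp (a+1)])
    (by intro i _; fin_cases i <;> simp <;> nlinarith)
    (by rw [Fin.sum_univ_three]; simp only [Matrix.cons_val_zero, Matrix.cons_val_one,
        Matrix.head_cons, Matrix.cons_val_two, Matrix.tail_cons]; nlinarith)
    (by intro i _; fin_cases i <;> simp)
  have hcm : (Finset.univ : Finset (Fin 3)).centerMass
      ![1, (2*(a:ℝ)-1)*((a:ℝ)+1), (a:ℝ)] ![Pp 0, Pp a, Pp (a+1)] = Qq a := by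
    rw [Finset.centerMass, Fin.sum_univ_three, Fin.sum_univ_three]
    simp only [Matrix.cons_val_zero, Matrix.cons_val_one, Matrix.head_cons,
      Matrix.cons_val_two, Matrix.tail_cons]
    have hs0 : (2*(a:ℝ)*((a:ℝ)+1)) ≠ 0 := by nlinarith
    apply Prod.ext
    · simp only [Prod.smul_fst, Prod.fst_add, Prod.smul_fst, Pp, Qq, smul_eq_mul]
      rw [show (1:ℝ) + (2*(a:ℝ)-1)*((a:ℝ)+1) + a = 2*(a:ℝ)*((a:ℝ)+1) from by ring]
      push_cast
      field_simp
      ring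
    · simp only [Prod.smul_snd, Prod.snd_add, Prod.smul_snd, Pp, Qq, smul_eq_mul]
      rw [show (1:ℝ) + (2*(a:ℝ)-1)*((a:ℝ)+1) + a = 2*(a:ℝ)*((a:ℝ)+1) from by ring]
      push_cast
      field_simp
      ring
  rwa [hcm] at hmem

lemma gadget_elim {k a : ℕ} (hk : 5 ≤ k) (ha1 : 1 ≤ a) (ha2 : a ≤ k-2) {y : Pt}
    (hy3 : y = Pp 0 ∨ y = Pp a ∨ y = Pp (a+1))
    {Q : Finset Pt} (hQs : (Q : Set Pt) ⊆ (Sset k : Set Pt)) (hQcard : 3 ≤ Q.card)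
    (hQconv : InConvexPosition Q)
    (hQhull : ∀ p q, IsHullEdgeOf Q p q → s(p, q) ∈ Ted k)
    (hQa : Qq a ∈ Q) (hyQ : y ∈ Q)
    (hop : openSegment ℝ (Qq a) y ⊆ interior (convexHull ℝ (Q : Set Pt))) : False := by
  classical
  obtain ⟨r, hrQ, s', hsQ, hrs, hrv, hsv, her, hes⟩ := hull_two_nbrs hQs hQcard hQconv hQa
  have hr3 := Ted_at_Qq (hQhull _ _ her)
  have hs3 := Ted_at_Qq (hQhull _ _ hes)
  have hmid : (1/2:ℝ) • (Qq a) + (1/2:ℝ) • y ∈ openSegment ℝ (Qq a) y :=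
    ⟨1/2, 1/2, by norm_num, by norm_num, by norm_num, rfl⟩
  have hint := hop hmid
  have hyr : y ≠ r := by
    rintro rfl
    have hfr : (1/2:ℝ) • (Qq a) + (1/2:ℝ) • y ∈ frontier (convexHull ℝ (Q : Set Pt)) :=
      her.2.2.2 (openSegment_subset_segment ℝ _ _ hmid)
    exact Set.disjoint_left.1 disjoint_interior_frontier hint hfr
  have hys : y ≠ s' := by
    rintro rfl
    have hfr : (1/2:ℝ) • (Qq a) + (1/2:ℝ) • y ∈ frontier (convexHull ℝ (Q : Set Pt)) :=
      hes.2.2.2 (openSegment_subset_segment ℝ _ _ hmid)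
    exact Set.disjoint_left.1 disjoint_interior_frontier hint hfr
  -- the three points y, r, s' are distinct and all lie in {P0, Pa, P(a+1)}
  have hmemT : ∀ t : Pt, (t = y ∨ t = r ∨ t = s') → t ∈ ({Pp 0, Pp a, Pp (a+1)} : Finset Pt) := by
    rintro t (rfl | rfl | rfl)
    · rcases hy3 with rfl | rfl | rfl <;> simp
    · rcases hr3 with rfl | rfl | rfl <;> simp
    · rcases hs3 with rfl | rfl | rfl <;> simp
  have hsub3 : ({y, r, s'} : Finset Pt) ⊆ ({Pp 0, Pp a, Pp (a+1)} : Finset Pt) := by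
    intro t ht
    simp only [Finset.mem_insert, Finset.mem_singleton] at ht
    exact hmemT t ht
  have hcard3 : ({y, r, s'} : Finset Pt).card = 3 := by
    rw [Finset.card_insert_of_notMem (by simp [hyr, hys]),
      Finset.card_insert_of_notMem (by simp [hrs]), Finset.card_singleton]
  have heq3 : ({y, r, s'} : Finset Pt) = ({Pp 0, Pp a, Pp (a+1)} : Finset Pt) := by
    apply Finset.eq_of_subset_of_card_le hsub3
    rw [hcard3]
    refine le_trans (Finset.card_insert_le _ _) ?_
    refine Nat.succ_le_succ (le_trans (Finset.card_insert_le _ _) ?_)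
    simp
  have hinQ : ∀ t : Pt, t ∈ ({Pp 0, Pp a, Pp (a+1)} : Finset Pt) → t ∈ Q := by
    intro t ht
    rw [← heq3] at ht
    simp only [Finset.mem_insert, Finset.mem_singleton] at ht
    rcases ht with rfl | rfl | rfl
    exacts [hyQ, hrQ, hsQ]
  have hsubset : ({Pp 0, Pp a, Pp (a+1)} : Set Pt) ⊆ ((Q.erase (Qq a) : Finset Pt) : Set Pt) := by
    intro t ht
    simp only [Set.mem_insert_iff, Set.mem_singleton_iff] at ht
    rcases ht with rfl | rfl | rfl
    · exact Finset.mem_coe.2 (Finset.mem_erase.2 ⟨Pp_ne_Qq 0 a, hinQ _ (by simp)⟩)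
    · exact Finset.mem_coe.2 (Finset.mem_erase.2 ⟨Pp_ne_Qq a a, hinQ _ (by simp)⟩)
    · exact Finset.mem_coe.2 (Finset.mem_erase.2 ⟨Pp_ne_Qq (a+1) a, hinQ _ (by simp)⟩)
  exact hQconv (Qq a) hQa (convexHull_mono hsubset (Qa_mem_hull ha1))

set_option maxHeartbeats 800000 in
lemma F_subset {k : ℕ} (hk : 5 ≤ k) {F : Finset (Sym2 Pt)}
    (hF : IsPsFlippable (Tgraph k hk) F) :
    F ⊆ (Finset.Icc 2 (k-2)).image (fun a => s(Pp 0, Pp a)) := by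
  obtain ⟨hFT, 𝒬, hQprop, hQdisj, hQdiag⟩ := hF
  intro e heF
  obtain ⟨Q, hQmem, hdiagQ⟩ := hQdiag e heF
  obtain ⟨hQs, hQcard, hQconv, hQhull, hQempty⟩ := hQprop Q hQmem
  have heT : e ∈ Ted k := hFT heF
  rcases mem_Ted_elim heT with ⟨a,h1,h2,rfl⟩|⟨a,h1,h2,rfl⟩|⟨a,h1,h2,rfl⟩|⟨a,h1,h2,rfl⟩|⟨a,h1,h2,rfl⟩
  · -- spoke
    rcases eq_or_ne a 1 with rfl | ha1
    · refine (no_diag_on_support (k := k) (α := -(2*((0:ℕ):ℝ)+1)) (β := 1)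
        (γ := ((0:ℕ):ℝ)*(((0:ℕ):ℝ)+1)) (Or.inl (by norm_num)) (hS_tan k 0) ?_ ?_ hQs hdiagQ).elim
      · simp only [lin, Pp]; norm_num
      · simp only [lin, Pp]; norm_num
    rcases eq_or_ne a (k-1) with rfl | ha2'
    · have hcast : ((k-1:ℕ):ℝ) = (k:ℝ)-1 := by
        rw [Nat.cast_sub (by omega), Nat.cast_one]
      refine (no_diag_on_support (k := k) (α := (k:ℝ)-1) (β := -1) (γ := 0)
        (Or.inl (by
          have h5 : (5:ℝ) ≤ k := by exact_mod_cast hk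
          intro h
          linarith))
        (hS_top k hk) ?_ ?_ hQs hdiagQ).elim
      · simp only [lin, Pp]; norm_num
      · simp only [lin, Pp]; rw [hcast]; ring
    · exact Finset.mem_image.2 ⟨a, Finset.mem_Icc.2 ⟨by omega, by omega⟩, rfl⟩
  · -- chain
    refine (no_diag_on_support (k := k) (α := -(2*(a:ℝ)+1)) (β := 1)
      (γ := (a:ℝ)*((a:ℝ)+1)) (Or.inl (by intro h; nlinarith [Nat.cast_nonneg (α := ℝ) a])) (hS_tan k a) ?_ ?_ hQs hdiagQ).elim
    · simp only [lin, Pp]; push_cast; ring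
    · simp only [lin, Pp]; push_cast; ring
  · -- g1
    obtain ⟨hQa, hyQ, hop⟩ := diag_unpack hdiagQ
    exact (gadget_elim hk h1 h2 (Or.inl rfl) hQs hQcard hQconv hQhull hQa hyQ hop).elim
  · -- g2
    obtain ⟨hQa, hyQ, hop⟩ := diag_unpack hdiagQ
    exact (gadget_elim hk h1 h2 (Or.inr (Or.inl rfl)) hQs hQcard hQconv hQhull hQa hyQ hop).elim
  · -- g3
    obtain ⟨hQa, hyQ, hop⟩ := diag_unpack hdiagQ
    exact (gadget_elim hk h1 h2 (Or.inr (Or.inr rfl)) hQs hQcard hQconv hQhull hQa hyQ hop).elim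

/-- For infinitely many `N` there are an `N`-point set in general
position and a triangulation of it in which every set of ps-flippable edges has
size at most `N/2 - 2`. -/
theorem statement4 :
    ∀ n : ℕ, ∃ N : ℕ, n ≤ N ∧ ∃ S : Finset Pt, S.card = N ∧ GenPos S ∧
      ∃ T : PlaneGraph S, IsTriangulation T ∧
        ∀ F : Finset (Sym2 Pt), IsPsFlippable T F →
          (F.card : ℝ) ≤ (N : ℝ) / 2 - 2 := by
  intro n
  have hk : 5 ≤ n + 5 := by omega
  refine ⟨2*(n+5) - 2, by omega, Sset (n+5), card_Sset (n+5) hk, genpos_Sset (n+5),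
    Tgraph (n+5) hk, Ted_max hk, ?_⟩
  intro F hF
  have hsubF := F_subset hk hF
  have hcard : F.card ≤ (n+5) - 3 := by
    calc F.card ≤ ((Finset.Icc 2 ((n+5)-2)).image (fun a => s(Pp 0, Pp a))).card :=
          Finset.card_le_card hsubF
    _ ≤ (Finset.Icc 2 ((n+5)-2)).card := Finset.card_image_le
    _ = (n+5) - 3 := by rw [Nat.card_Icc]; omega
  have hFR : (F.card : ℝ) ≤ ((n:ℝ)+5) - 3 := by
    have h3 : (((n+5) - 3 : ℕ):ℝ) = ((n:ℝ)+5) - 3 := by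
      rw [Nat.cast_sub (by omega)]; push_cast; ring
    calc (F.card:ℝ) ≤ (((n+5) - 3 : ℕ):ℝ) := by exact_mod_cast hcard
    _ = ((n:ℝ)+5) - 3 := h3
  have hN : ((2*(n+5) - 2 : ℕ):ℝ) = 2*((n:ℝ)+5) - 2 := by
    rw [Nat.cast_sub (by omega)]; push_cast; ring
  rw [hN]
  linarith

end
end

section
/- Let c > 1 and A > 0 be constants such that every set S of an even number of points in the plane in general position satisfies sc(S) ≤ A · c^{|S|}. Then there is a constant A' > 0 such that sc(S) ≤ A' · c^{|S|} also holds for every set S of an odd number of points in the plane in general position. -/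
open scoped Classical

noncomputable section

namespace S7

open Fin.CommRing

/-- 2x2 determinant of two plane vectors. -/
def det2 (u v : Pt) : ℝ := u.1 * v.2 - u.2 * v.1

lemma collinear_iff_det (u v w : Pt) :
    Collinear ℝ ({u, v, w} : Set Pt) ↔ det2 (v - u) (w - u) = 0 := by
  constructor
  · intro h
    rw [collinear_iff_of_mem (Set.mem_insert u {v, w})] at h
    obtain ⟨d, hd⟩ := h
    obtain ⟨r, hr⟩ := hd v (by simp)
    obtain ⟨r', hr'⟩ := hd w (by simp)
    have hv : v - u = r • d := by rw [hr]; simp [vadd_eq_add]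
    have hw : w - u = r' • d := by rw [hr']; simp [vadd_eq_add]
    rw [hv, hw]
    simp only [det2, Prod.smul_fst, Prod.smul_snd, smul_eq_mul]
    ring
  · intro h
    by_cases hvu : v - u = 0
    · have hvu' : v = u := by rwa [sub_eq_zero] at hvu
      apply Collinear.subset (s₂ := ({u, w} : Set Pt))
      · intro p hp; rcases hp with h1 | h2 | h3 <;> simp_all
      · exact collinear_pair ℝ u w
    · rw [collinear_iff_of_mem (Set.mem_insert u {v, w})]
      refine ⟨v - u, fun p hp => ?_⟩
      have key : ∀ r : ℝ, p - u = r • (v - u) → ∃ r' : ℝ, p = r' • (v - u) +ᵥ u := by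
        intro r hr
        exact ⟨r, by rw [vadd_eq_add, ← hr]; abel⟩
      rcases hp with rfl | hp'
      · exact key 0 (by simp)
      rcases hp' with rfl | hp''
      · exact key 1 (by simp)
      · have hp3 : p = w := hp''
        subst hp3
        simp only [det2, Prod.fst_sub, Prod.snd_sub] at h
        have h1 : v.1 - u.1 ≠ 0 ∨ v.2 - u.2 ≠ 0 := by
          by_contra hc
          push_neg at hc
          exact hvu (by apply Prod.ext <;> simp [Prod.fst_sub, Prod.snd_sub, sub_eq_zero] at hc ⊢ <;> tauto)
        rcases h1 with h1 | h1
        · apply key ((p.1 - u.1) / (v.1 - u.1))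
          apply Prod.ext <;>
            simp only [Prod.smul_fst, Prod.smul_snd, smul_eq_mul, Prod.fst_sub, Prod.snd_sub] <;>
            field_simp
          first | linear_combination h | linear_combination -h | linear_combination 2*h | first | linear_combination h | linear_combination -h | linear_combination 2*h | linear_combination -2*h
        · apply key ((p.2 - u.2) / (v.2 - u.2))
          apply Prod.ext <;>
            simp only [Prod.smul_fst, Prod.smul_snd, smul_eq_mul, Prod.fst_sub, Prod.snd_sub] <;>
            field_simp
          first | linear_combination h | linear_combination -h | linear_combination 2*h | linear_combination -2*h

lemma seg2_mk (a b : Pt) : seg2 s(a, b) = segment ℝ a b := rfl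

lemma seg_param {a b y : Pt} (h : y ∈ segment ℝ a b) :
    ∃ t : ℝ, 0 ≤ t ∧ t ≤ 1 ∧ y.1 = a.1 + t * (b.1 - a.1) ∧ y.2 = a.2 + t * (b.2 - a.2) := by
  rw [segment_eq_image'] at h
  obtain ⟨t, ht, rfl⟩ := h
  refine ⟨t, ht.1, ht.2, ?_, ?_⟩ <;>
    simp [Prod.fst_sub, Prod.snd_sub, smul_eq_mul] <;> ring

lemma seg_common {v u w : Pt} (h : det2 (u - v) (w - v) ≠ 0) :
    ∀ y ∈ segment ℝ v u ∩ segment ℝ v w, y = v := by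
  rintro y ⟨h1, h2⟩
  obtain ⟨t, ht0, ht1, hy1, hy2⟩ := seg_param h1
  obtain ⟨s, hs0, hs1, hz1, hz2⟩ := seg_param h2
  simp only [det2, Prod.fst_sub, Prod.snd_sub] at h
  have e1 : t * (u.1 - v.1) = s * (w.1 - v.1) := by linarith
  have e2 : t * (u.2 - v.2) = s * (w.2 - v.2) := by linarith
  have key : t * ((u.1 - v.1) * (w.2 - v.2) - (u.2 - v.2) * (w.1 - v.1)) = 0 := by
    linear_combination (w.2 - v.2) * e1 - (w.1 - v.1) * e2
  have ht : t = 0 := by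
    rcases mul_eq_zero.1 key with h' | h'
    · exact h'
    · exact absurd h' h
  apply Prod.ext <;> simp [hy1, hy2, ht]

/-- Linear functional along the generic direction. -/
def L (lam : ℝ) (y : Pt) : ℝ := y.1 + lam * y.2

/-- Complementary linear functional. -/
def M (lam : ℝ) (y : Pt) : ℝ := y.2 - lam * y.1

lemma L_seg {lam : ℝ} {a b y : Pt} (h : y ∈ segment ℝ a b) :
    L lam y ≤ max (L lam a) (L lam b) := by
  obtain ⟨t, ht0, ht1, hy1, hy2⟩ := seg_param h
  rcases le_total (L lam a) (L lam b) with hab | hab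
  · rw [max_eq_right hab]
    have : L lam y = (1 - t) * L lam a + t * L lam b := by
      simp only [L, hy1, hy2]; ring
    nlinarith
  · rw [max_eq_left hab]
    have : L lam y = (1 - t) * L lam a + t * L lam b := by
      simp only [L, hy1, hy2]; ring
    nlinarith

lemma core_alg {E Q B1 Q2 B2 t s : ℝ} (hE : 0 < E) (hB1 : B1 < 0)
    (ht0 : 0 ≤ t) (ht1 : t ≤ 1) (hs0 : 0 ≤ s)
    (e1 : (1 - t) * E + t * Q = s * B1) (e2 : t * Q2 = s * B2)
    (hrule : 0 < (Q * B2 - Q2 * B1) * B2 ∨ Q2 * B2 < 0) : False := by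
  have hsB1 : s * B1 ≤ 0 := mul_nonpos_of_nonneg_of_nonpos hs0 hB1.le
  rcases hrule with hr | hr
  · have key : (1 - t) * E * B2 ^ 2 = - (t * ((Q * B2 - Q2 * B1) * B2)) := by
      linear_combination B2 ^ 2 * e1 - B1 * B2 * e2
    have hge : 0 ≤ (1 - t) * E * B2 ^ 2 :=
      mul_nonneg (mul_nonneg (by linarith) hE.le) (sq_nonneg B2)
    have htle : t ≤ 0 := by nlinarith
    have ht : t = 0 := le_antisymm htle ht0
    rw [ht] at e1
    simp at e1
    linarith
  · have h0 : t * (Q2 * B2) = s * B2 ^ 2 := by linear_combination B2 * e2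
    have hge : 0 ≤ s * B2 ^ 2 := mul_nonneg hs0 (sq_nonneg B2)
    have htle : t ≤ 0 := by nlinarith
    have ht : t = 0 := le_antisymm htle ht0
    rw [ht] at e1 e2
    simp at e1 e2
    have hB2 : B2 ≠ 0 := fun h => by rw [h] at hr; simp at hr
    rcases e2 with h' | h'
    · rw [h'] at e1; simp at e1; linarith
    · exact hB2 h'
lemma no_cross {lam : ℝ} {p x q b : Pt}
    (hMx : M lam (x - p) = 0)
    (hE : 0 < L lam (x - p))
    (hQ : L lam (q - p) < 0)
    (hB1 : L lam (b - p) < 0)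
    (hrule : 0 < (L lam (q - p) * M lam (b - p) - M lam (q - p) * L lam (b - p)) * M lam (b - p)
      ∨ M lam (q - p) * M lam (b - p) < 0) :
    segment ℝ x q ∩ segment ℝ p b = ∅ := by
  rw [Set.eq_empty_iff_forall_notMem]
  rintro y ⟨hy, hz⟩
  obtain ⟨t, ht0, ht1, hy1, hy2⟩ := seg_param hy
  obtain ⟨s, hs0, hs1, hz1, hz2⟩ := seg_param hz
  simp only [L, M, Prod.fst_sub, Prod.snd_sub] at hMx hE hQ hB1 hrule ⊢
  have e1 : (1 - t) * ((x.1 - p.1) + lam * (x.2 - p.2)) + t * ((q.1 - p.1) + lam * (q.2 - p.2))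
      = s * ((b.1 - p.1) + lam * (b.2 - p.2)) := by
    linear_combination hz1 - hy1 + lam * (hz2 - hy2)
  have e2 : t * ((q.2 - p.2) - lam * (q.1 - p.1)) = s * ((b.2 - p.2) - lam * (b.1 - p.1)) := by
    first
    | linear_combination hz2 - hy2 - lam * (hz1 - hy1) + (1 - t) * hMx
    | linear_combination hz2 - hy2 - lam * (hz1 - hy1) - (1 - t) * hMx
  exact core_alg hE hB1 ht0 ht1 hs0 e1 e2 hrule
lemma lin_solset_finite {a c : ℝ} (h : a ≠ 0 ∨ c ≠ 0) : {x : ℝ | c + x * a = 0}.Finite := by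
  rcases eq_or_ne a 0 with ha | ha
  · subst ha
    have hc : c ≠ 0 := by tauto
    convert Set.finite_empty
    ext x; simp [hc]
  · apply Set.Finite.subset (Set.finite_singleton (-c / a))
    intro x hx
    simp only [Set.mem_setOf_eq] at hx
    simp only [Set.mem_singleton_iff]
    field_simp
    linarith

lemma exists_good_lam (S : Finset Pt) :
    ∃ lam : ℝ, ∀ u ∈ S, ∀ v ∈ S, u ≠ v → L lam u ≠ L lam v ∧ M lam (v - u) ≠ 0 := by
  classical
  have hbad : ∀ u v : Pt, u ≠ v →
      {lam : ℝ | L lam u = L lam v ∨ M lam (v - u) = 0}.Finite := by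
    intro u v huv
    have h1 : {lam : ℝ | L lam u = L lam v}.Finite := by
      have : {lam : ℝ | L lam u = L lam v} = {lam : ℝ | (u.1 - v.1) + lam * (u.2 - v.2) = 0} := by
        ext lam; simp only [Set.mem_setOf_eq, L]; constructor <;> intro h <;> linarith
      rw [this]
      apply lin_solset_finite
      by_contra hc
      push_neg at hc
      exact huv (Prod.ext (by linarith [hc.2]) (by linarith [hc.1]))
    have h2 : {lam : ℝ | M lam (v - u) = 0}.Finite := by
      have : {lam : ℝ | M lam (v - u) = 0}
          = {lam : ℝ | (v.2 - u.2) + lam * (-(v.1 - u.1)) = 0} := by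
        ext lam; simp only [Set.mem_setOf_eq, M, Prod.fst_sub, Prod.snd_sub]
        constructor <;> intro h <;> linarith
      rw [this]
      apply lin_solset_finite
      by_contra hc
      push_neg at hc
      exact huv (Prod.ext (by linarith [hc.1]) (by linarith [hc.2]))
    have : {lam : ℝ | L lam u = L lam v ∨ M lam (v - u) = 0}
        = {lam : ℝ | L lam u = L lam v} ∪ {lam : ℝ | M lam (v - u) = 0} := by
      ext lam; simp [Set.mem_union]
    rw [this]; exact h1.union h2
  have hBig : (⋃ u ∈ (S : Set Pt), ⋃ v ∈ (S : Set Pt),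
      {lam : ℝ | u ≠ v ∧ (L lam u = L lam v ∨ M lam (v - u) = 0)}).Finite := by
    apply Set.Finite.biUnion S.finite_toSet
    intro u _
    apply Set.Finite.biUnion S.finite_toSet
    intro v _
    rcases eq_or_ne u v with rfl | huv
    · convert Set.finite_empty; ext lam; simp
    · exact Set.Finite.subset (hbad u v huv) (fun lam h => h.2)
  obtain ⟨lam, hlam⟩ := hBig.infinite_compl.nonempty
  refine ⟨lam, fun u hu v hv huv => ?_⟩
  simp only [Set.mem_compl_iff, Set.mem_iUnion, not_exists] at hlam
  have := hlam u
  simp only [Set.mem_iUnion, not_exists, Set.mem_setOf_eq] at this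
  have h2 := this hu v hv
  push_neg at h2
  exact h2 huv

lemma isCompact_seg (a b : Pt) : IsCompact (segment ℝ a b) := by
  rw [segment_eq_image']
  exact isCompact_Icc.image (by continuity)

lemma seg_perturb {p q : Pt} {U : Set Pt} (hU : IsClosed U)
    (hd : segment ℝ p q ∩ U = ∅) :
    ∃ δ : ℝ, 0 < δ ∧ ∀ x : Pt, dist x p < δ → segment ℝ x q ∩ U = ∅ := by
  rcases Set.eq_empty_or_nonempty U with rfl | hUne
  · exact ⟨1, one_pos, fun x _ => by simp⟩
  have hK : IsCompact (segment ℝ p q) := isCompact_seg p q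
  have hKne : (segment ℝ p q).Nonempty := ⟨p, left_mem_segment ℝ p q⟩
  obtain ⟨y₀, hy₀K, hy₀min⟩ := hK.exists_isMinOn hKne
    ((Metric.continuous_infDist_pt U).continuousOn)
  have hy₀U : y₀ ∉ U := fun h => by
    have := Set.eq_empty_iff_forall_notMem.1 hd y₀
    exact this ⟨hy₀K, h⟩
  have hδpos : 0 < Metric.infDist y₀ U := (hU.notMem_iff_infDist_pos hUne).1 hy₀U
  refine ⟨Metric.infDist y₀ U, hδpos, fun x hx => ?_⟩
  rw [Set.eq_empty_iff_forall_notMem]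
  rintro y ⟨hyseg, hyU⟩
  obtain ⟨t, ht0, ht1, hy1, hy2⟩ := seg_param hyseg
  set y' : Pt := p + t • (q - p) with hy'
  have hy'K : y' ∈ segment ℝ p q := by
    rw [segment_eq_image']
    exact ⟨t, ⟨ht0, ht1⟩, rfl⟩
  have hdist : dist y y' ≤ dist x p := by
    have : y - y' = (1 - t) • (x - p) := by
      apply Prod.ext <;>
        simp only [Prod.fst_sub, Prod.snd_sub, Prod.smul_fst, Prod.smul_snd, smul_eq_mul,
          Prod.fst_add, Prod.snd_add, hy1, hy2, hy'] <;> ring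
    rw [dist_eq_norm, this, dist_eq_norm]
    calc ‖(1 - t) • (x - p)‖ = |1 - t| * ‖x - p‖ := by rw [norm_smul]; simp
    _ ≤ 1 * ‖x - p‖ := by
        apply mul_le_mul_of_nonneg_right _ (norm_nonneg _)
        rw [abs_le]; constructor <;> linarith
    _ = ‖x - p‖ := one_mul _
  have h1 : Metric.infDist y' U ≤ dist y' y := Metric.infDist_le_dist_of_mem hyU
  have h2 : Metric.infDist y₀ U ≤ Metric.infDist y' U := hy₀min hy'K
  rw [dist_comm] at h1
  linarith
lemma det2_perturb (p w u v : Pt) (ε : ℝ) :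
    det2 (u - (p + ε • w)) (v - (p + ε • w))
      = det2 (u - p) (v - p) + ε * (- det2 w (v - u)) := by
  simp only [det2, Prod.fst_sub, Prod.snd_sub, Prod.fst_add, Prod.snd_add,
    Prod.smul_fst, Prod.smul_snd, smul_eq_mul]
  ring

lemma exists_good_eps (S : Finset Pt) (p w : Pt)
    (hw : ∀ u ∈ S, ∀ v ∈ S, u ≠ v → det2 w (v - u) ≠ 0) :
    ∃ ε : ℝ, 0 < ε ∧
      (∀ u ∈ S, ∀ v ∈ S, u ≠ v → ¬ Collinear ℝ ({p + ε • w, u, v} : Set Pt)) ∧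
      (∀ q ∈ S, ∀ u ∈ S, ∀ v ∈ S, segment ℝ p q ∩ segment ℝ u v = ∅ →
        segment ℝ (p + ε • w) q ∩ segment ℝ u v = ∅) := by
  classical
  set T : Finset (Pt × Pt × Pt) := S ×ˢ S ×ˢ S with hT
  have hval : ∀ z : Pt × Pt × Pt, ∃ δ : ℝ, 0 < δ ∧
      (segment ℝ p z.1 ∩ segment ℝ z.2.1 z.2.2 = ∅ → ∀ x : Pt, dist x p < δ →
        segment ℝ x z.1 ∩ segment ℝ z.2.1 z.2.2 = ∅) := by
    intro z
    by_cases hP : segment ℝ p z.1 ∩ segment ℝ z.2.1 z.2.2 = ∅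
    · obtain ⟨δ, hδ, hspec⟩ := seg_perturb (isCompact_seg z.2.1 z.2.2).isClosed hP
      exact ⟨δ, hδ, fun _ x hx => hspec x hx⟩
    · exact ⟨1, one_pos, fun h => absurd h hP⟩
  choose δf hδpos hδspec using hval
  set ε₁ : ℝ := if hne : T.Nonempty then T.inf' hne δf else 1 with hε₁
  have hε₁pos : 0 < ε₁ := by
    rw [hε₁]
    split
    · rw [Finset.lt_inf'_iff]
      intro z _; exact hδpos z
    · exact one_pos
  have hε₁le : ∀ z ∈ T, ε₁ ≤ δf z := by
    intro z hz
    rw [hε₁]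
    rw [dif_pos ⟨z, hz⟩]
    exact Finset.inf'_le _ hz
  set ε' : ℝ := ε₁ / (‖w‖ + 1) with hε'
  have hwpos : (0:ℝ) < ‖w‖ + 1 := by positivity
  have hε'pos : 0 < ε' := div_pos hε₁pos hwpos
  -- finite bad set of collinearity values
  have hBfin : (⋃ u ∈ (S : Set Pt), ⋃ v ∈ (S : Set Pt),
      {ε : ℝ | u ≠ v ∧ det2 (u - (p + ε • w)) (v - (p + ε • w)) = 0}).Finite := by
    apply Set.Finite.biUnion S.finite_toSet
    intro u hu
    apply Set.Finite.biUnion S.finite_toSet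
    intro v hv
    rcases eq_or_ne u v with rfl | huv
    · convert Set.finite_empty; ext ε; simp
    · apply Set.Finite.subset
        (lin_solset_finite (a := - det2 w (v - u)) (c := det2 (u - p) (v - p))
          (Or.inl (by simpa using hw u hu v hv huv)))
      intro ε hε
      obtain ⟨-, hε2⟩ := hε
      simp only [Set.mem_setOf_eq]
      rw [det2_perturb] at hε2
      linarith [hε2]
  obtain ⟨ε, hε⟩ := ((Set.Ioo_infinite hε'pos).diff hBfin).nonempty
  obtain ⟨hεIoo, hεB⟩ := hε
  obtain ⟨hεpos, hεlt⟩ := hεIoo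
  refine ⟨ε, hεpos, ?_, ?_⟩
  · intro u hu v hv huv hcol
    rw [collinear_iff_det] at hcol
    apply hεB
    simp only [Set.mem_iUnion]
    exact ⟨u, hu, v, hv, huv, hcol⟩
  · intro q hq u hu v hv hdisj
    have hz : (q, u, v) ∈ T := by
      rw [hT]
      simp [Finset.mem_product, hq, hu, hv]
    apply hδspec (q, u, v) hdisj
    have hd : dist (p + ε • w) p = ε * ‖w‖ := by
      rw [dist_eq_norm]
      have : p + ε • w - p = ε • w := by abel
      rw [this, norm_smul]
      simp [abs_of_pos hεpos]
    rw [hd]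
    calc ε * ‖w‖ ≤ ε * (‖w‖ + 1) := by nlinarith [norm_nonneg w]
    _ < ε' * (‖w‖ + 1) := by nlinarith
    _ = ε₁ := by rw [hε']; field_simp
    _ ≤ δf (q, u, v) := hε₁le _ hz
lemma PlaneGraph.ext' {S : Finset Pt} {G H : PlaneGraph S} (h : G.edges = H.edges) : G = H := by
  cases G; cases H; simp_all

instance planeGraphFinite (S : Finset Pt) : Finite (PlaneGraph S) := by
  classical
  let E0 : Finset (Sym2 Pt) := (S ×ˢ S).image (fun z : Pt × Pt => s(z.1, z.2))
  apply Finite.of_injective (β := {t // t ∈ E0.powerset})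
    (f := fun G => ⟨G.edges, by
      rw [Finset.mem_powerset]
      intro e he
      induction e using Sym2.ind with
      | _ a b =>
        have ha := G.endpoint_mem _ he a (by simp)
        have hb := G.endpoint_mem _ he b (by simp)
        simp only [E0, Finset.mem_image]
        exact ⟨(a, b), Finset.mem_product.2 ⟨ha, hb⟩, rfl⟩⟩)
  intro G H h
  exact PlaneGraph.ext' (congrArg Subtype.val h)

lemma image_comp_equiv {α β γ : Type*} [Fintype α] [Fintype β] [DecidableEq γ]
    (e : α ≃ β) (F : β → γ) :
    Finset.image (fun a => F (e a)) Finset.univ = Finset.image F Finset.univ := by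
  ext c
  simp only [Finset.mem_image, Finset.mem_univ, true_and]
  constructor
  · rintro ⟨a, rfl⟩; exact ⟨e a, rfl⟩
  · rintro ⟨b, rfl⟩; exact ⟨e.symm b, by simp⟩

lemma finRotate_cast {n n' : ℕ} (h : n = n') (i : Fin n) :
    finRotate n' (Fin.cast h i) = Fin.cast h (finRotate n i) := by subst h; rfl

lemma one_ne_zero_fin (m : ℕ) : (1 : Fin (m+3)) ≠ 0 := by simp [Fin.ext_iff]

lemma neg_one_ne_zero_fin (m : ℕ) : (-1 : Fin (m+3)) ≠ 0 := by
  intro h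
  have : ((-1 : Fin (m+3)) : ℕ) = 0 := by rw [h]; rfl
  simp at this

lemma add_one_ne (m : ℕ) (k : Fin (m+3)) : k + 1 ≠ k := by
  intro h
  have h2 : k + 1 = k + 0 := by rw [h]; ring
  exact one_ne_zero_fin m (add_left_cancel h2)

lemma sub_one_ne (m : ℕ) (k : Fin (m+3)) : k - 1 ≠ k := by
  intro h
  have h2 : k + (-1) = k + 0 := by rw [show k + (-1) = k - 1 by ring, h]; ring
  exact neg_one_ne_zero_fin m (add_left_cancel h2)

lemma add_one_ne_sub_one (m : ℕ) (k : Fin (m+3)) : k + 1 ≠ k - 1 := by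
  intro h
  have h2 : k + 2 = k + 0 := by rw [show k+2 = (k+1)+1 by ring, h]; ring
  have h3 : (2 : Fin (m+3)) = 0 := add_left_cancel h2
  have : ((2 : Fin (m+3)) : ℕ) = 0 := by rw [h3]; rfl
  simp [Fin.ext_iff, Nat.mod_eq_of_lt] at this

lemma pair_inj {α : Type*} {m : ℕ} (g : Fin (m+3) → α) (hg : Function.Injective g)
    (i k : Fin (m+3)) (h : s(g i, g (i+1)) = s(g k, g (k+1))) : i = k := by
  rw [Sym2.eq_iff] at h
  rcases h with ⟨h1, _⟩ | ⟨h1, h2⟩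
  · exact hg h1
  · have hik : i = k + 1 := hg h1
    have hki : i + 1 = k := hg h2
    exact absurd (by rw [← hik, eq_sub_of_add_eq hki] : k + 1 = k - 1) (add_one_ne_sub_one m k)

lemma cycle_edges_reindex {S : Finset Pt} (f : Fin S.card ≃ {y // y ∈ S}) {m : ℕ}
    (hm : S.card = m+3) :
    ∃ g : Fin (m+3) ≃ {y // y ∈ S},
      (Finset.image (fun i : Fin S.card =>
          s(((f i : Pt)), ((f (finRotate S.card i) : Pt)))) Finset.univ)
        = Finset.image (fun i : Fin (m+3) => s((g i : Pt), (g (i+1) : Pt))) Finset.univ := by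
  refine ⟨(finCongr hm).symm.trans f, ?_⟩
  have hpt : (fun i : Fin (m+3) => s(((((finCongr hm).symm.trans f) i : Pt)),
        ((((finCongr hm).symm.trans f) (i+1) : Pt))))
      = fun a : Fin (m+3) => (fun i0 : Fin S.card =>
        s(((f i0 : Pt)), ((f (finRotate S.card i0) : Pt)))) ((finCongr hm).symm a) := by
    funext i
    have key : finRotate S.card ((finCongr hm).symm i) = (finCongr hm).symm (i+1) := by
      have h0 := finRotate_cast hm.symm i
      simpa [finCongr, finRotate_succ_apply] using h0
    simp only [Equiv.trans_apply, key]
  rw [hpt, image_comp_equiv ((finCongr hm).symm)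
    (fun i0 : Fin S.card => s(((f i0 : Pt)), ((f (finRotate S.card i0) : Pt))))]
lemma nbrs {S : Finset Pt} {m : ℕ} (g : Fin (m+3) ≃ {y // y ∈ S}) {p : Pt}
    (k : Fin (m+3)) (hk : (g k : Pt) = p) :
    s(p, (g (k+1) : Pt)) ∈ Finset.image
        (fun i : Fin (m+3) => s((g i : Pt), (g (i+1) : Pt))) Finset.univ ∧
    s(p, (g (k-1) : Pt)) ∈ Finset.image
        (fun i : Fin (m+3) => s((g i : Pt), (g (i+1) : Pt))) Finset.univ ∧
    (g (k+1) : Pt) ≠ p ∧ (g (k-1) : Pt) ≠ p ∧ (g (k+1) : Pt) ≠ (g (k-1) : Pt) ∧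
    ∀ e ∈ Finset.image (fun i : Fin (m+3) => s((g i : Pt), (g (i+1) : Pt))) Finset.univ,
      p ∈ e → e = s(p, (g (k+1) : Pt)) ∨ e = s(p, (g (k-1) : Pt)) := by
  have hginj : Function.Injective (fun i : Fin (m+3) => (g i : Pt)) := fun a b hab =>
    g.injective (Subtype.coe_injective hab)
  have h1 : s(p, (g (k+1) : Pt))
      ∈ Finset.image (fun i : Fin (m+3) => s((g i : Pt), (g (i+1) : Pt))) Finset.univ := by
    rw [Finset.mem_image]
    exact ⟨k, Finset.mem_univ k, by rw [hk]⟩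
  have h2 : s(p, (g (k-1) : Pt))
      ∈ Finset.image (fun i : Fin (m+3) => s((g i : Pt), (g (i+1) : Pt))) Finset.univ := by
    rw [Finset.mem_image]
    refine ⟨k-1, Finset.mem_univ _, ?_⟩
    rw [show k - 1 + 1 = k by ring, hk, Sym2.eq_swap]
  refine ⟨h1, h2, ?_, ?_, ?_, ?_⟩
  · intro h
    rw [← hk] at h
    exact add_one_ne m k (hginj h)
  · intro h
    rw [← hk] at h
    exact sub_one_ne m k (hginj h)
  · intro h
    exact add_one_ne_sub_one m k (hginj h)
  · intro e he hpe
    rw [Finset.mem_image] at he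
    obtain ⟨i, -, rfl⟩ := he
    rw [Sym2.mem_iff] at hpe
    rcases hpe with hpe | hpe
    · have : i = k := hginj (by simp only []; rw [← hpe, hk])
      subst this
      left; rw [hk]
    · have hik : i + 1 = k := hginj (by simp only []; rw [← hpe, hk])
      have : i = k - 1 := eq_sub_of_add_eq hik
      subst this
      right
      rw [show k - 1 + 1 = k by ring, hk, Sym2.eq_swap]
lemma insert_cycle {S : Finset Pt} {m : ℕ} (hcard : S.card = m+3)
    (g : Fin (m+3) ≃ {y // y ∈ S}) {x : Pt} (hx : x ∉ S) (j : Fin (m+3)) :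
    ∃ f' : Fin ((insert x S).card) ≃ {y // y ∈ insert x S},
      Finset.image (fun i => s(((f' i : Pt)), ((f' (finRotate (insert x S).card i) : Pt))))
          Finset.univ
        = ((Finset.image (fun i : Fin (m+3) => s((g i : Pt), (g (i+1) : Pt))) Finset.univ).erase
            s((g j : Pt), (g (j+1) : Pt)))
          ∪ {s((g j : Pt), x), s(x, (g (j+1) : Pt))} := by
  classical
  have hcard' : (insert x S).card = m+4 := by rw [Finset.card_insert_of_notMem hx, hcard]
  set g2 : Fin (m+3) ≃ {y // y ∈ S} := (Equiv.addRight (j+1)).trans g with hg2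
  have hg2app : ∀ i : Fin (m+3), g2 i = g (i + (j+1)) := fun i => rfl
  have hlastj : (g2 (-1) : Pt) = (g j : Pt) := by
    have harith : (-1 : Fin (m+3)) + (j+1) = j := by ring
    rw [hg2app, harith]
  have h0j : (g2 0 : Pt) = (g (j+1) : Pt) := by
    have harith : (0 : Fin (m+3)) + (j+1) = j+1 := by ring
    rw [hg2app, harith]
  have hg2inj : Function.Injective (fun i : Fin (m+3) => (g2 i : Pt)) := fun a b hab =>
    g2.injective (Subtype.coe_injective hab)
  have himg : Finset.image (fun i : Fin (m+3) => s((g i : Pt), (g (i+1) : Pt))) Finset.univ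
      = Finset.image (fun i : Fin (m+3) => s((g2 i : Pt), (g2 (i+1) : Pt))) Finset.univ := by
    symm
    have hpt : (fun i : Fin (m+3) => s((g2 i : Pt), (g2 (i+1) : Pt)))
        = fun a : Fin (m+3) => (fun i : Fin (m+3) => s((g i : Pt), (g (i+1) : Pt)))
            ((Equiv.addRight (j+1)) a) := by
      funext a
      have harith : a + 1 + (j + 1) = (a + (j+1)) + 1 := by ring
      simp only [hg2app, Equiv.coe_addRight, harith]
    rw [hpt]
    exact image_comp_equiv (Equiv.addRight (j+1))
      (fun i : Fin (m+3) => s((g i : Pt), (g (i+1) : Pt)))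
  set F : Fin (m+4) → {y // y ∈ insert x S} := fun i =>
    if hi : (i : ℕ) < m+3 then
      ⟨(g2 ⟨(i:ℕ), hi⟩ : Pt), Finset.mem_insert_of_mem (g2 ⟨(i:ℕ), hi⟩).2⟩
    else ⟨x, Finset.mem_insert_self x S⟩ with hF
  have hFlt : ∀ (i : Fin (m+4)) (hi : (i:ℕ) < m+3), (F i : Pt) = (g2 ⟨(i:ℕ), hi⟩ : Pt) := by
    intro i hi; simp only [hF, dif_pos hi]
  have hFxval : ∀ (i : Fin (m+4)), ¬ ((i:ℕ) < m+3) → (F i : Pt) = x := by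
    intro i hi; simp only [hF, dif_neg hi]
  have hFinj : Function.Injective F := by
    intro i1 i2 heq
    have hcoe : (F i1 : Pt) = (F i2 : Pt) := by rw [heq]
    by_cases d1 : (i1:ℕ) < m+3 <;> by_cases d2 : (i2:ℕ) < m+3
    · rw [hFlt i1 d1, hFlt i2 d2] at hcoe
      have h5 := hg2inj hcoe
      exact Fin.ext (congrArg (fun z : Fin (m+3) => z.val) h5)
    · rw [hFlt i1 d1, hFxval i2 d2] at hcoe
      exact absurd (hcoe ▸ (g2 ⟨(i1:ℕ), d1⟩).2) hx
    · rw [hFxval i1 d1, hFlt i2 d2] at hcoe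
      exact absurd (hcoe ▸ (g2 ⟨(i2:ℕ), d2⟩).2) hx
    · have e1 : (i1:ℕ) = m+3 := by omega
      have e2 : (i2:ℕ) = m+3 := by omega
      exact Fin.ext (by omega)
  have hFbij : Function.Bijective F :=
    (Fintype.bijective_iff_injective_and_card F).2
      ⟨hFinj, by simp [Fintype.card_coe, hcard']⟩
  set e0 : Fin (m+4) ≃ {y // y ∈ insert x S} := Equiv.ofBijective F hFbij with he0
  have he0app : ∀ i, e0 i = F i := fun i => rfl
  refine ⟨(finCongr hcard').trans e0, ?_⟩
  have hLHS : (fun i : Fin ((insert x S).card) =>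
        s(((((finCongr hcard').trans e0) i : Pt)),
          ((((finCongr hcard').trans e0) (finRotate ((insert x S).card) i) : Pt))))
      = fun a : Fin ((insert x S).card) =>
          (fun i' : Fin (m+4) => s((F i' : Pt), (F (i'+1) : Pt))) ((finCongr hcard') a) := by
    funext i
    have key : (finCongr hcard') (finRotate ((insert x S).card) i)
        = (finCongr hcard') i + 1 := by
      have h0 := finRotate_cast hcard' i
      have h1 : finRotate (m+4) ((finCongr hcard') i) = (finCongr hcard') i + 1 :=
        finRotate_succ_apply _
      rw [← h1]
      exact h0.symm
    simp only [Equiv.trans_apply, key, he0app]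
  rw [hLHS, image_comp_equiv (finCongr hcard')
    (fun i' : Fin (m+4) => s((F i' : Pt), (F (i'+1) : Pt)))]
  rw [himg, ← hlastj, ← h0j]
  -- now: image over Fin (m+4) = (image g2-cycle).erase s(g2 (-1), g2 0) ∪ {s(g2 (-1), x), s(x, g2 0)}
  have hneg1 : ((-1 : Fin (m+3)) : ℕ) = m+2 := by simp
  have hOE : ∀ a : Fin (m+3), (a:ℕ) < m+2 →
      ∀ i : Fin (m+4), (i:ℕ) = (a:ℕ) → s((F i : Pt), (F (i+1) : Pt)) = s((g2 a : Pt), (g2 (a+1) : Pt)) := by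
    intro a ha i hia
    have hi3 : (i:ℕ) < m+3 := by omega
    have hilast : i < Fin.last (m+3) := by
      rw [Fin.lt_iff_val_lt_val]; simp; omega
    have hi1 : ((i+1 : Fin (m+4)) : ℕ) = (i:ℕ)+1 := Fin.val_add_one_of_lt hilast
    have hi13 : ((i+1 : Fin (m+4)) : ℕ) < m+3 := by omega
    have halast : a < Fin.last (m+2) := by
      rw [Fin.lt_iff_val_lt_val]; simp; omega
    have ha1 : ((a+1 : Fin (m+3)) : ℕ) = (a:ℕ)+1 := Fin.val_add_one_of_lt halast
    have e1 : (⟨(i:ℕ), hi3⟩ : Fin (m+3)) = a := Fin.ext hia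
    have e2 : (⟨((i+1 : Fin (m+4)):ℕ), hi13⟩ : Fin (m+3)) = a + 1 := by
      apply Fin.ext
      simp only [ha1, hi1, hia]
    rw [hFlt i hi3, hFlt (i+1) hi13, e1, e2]
  have hOEend : ∀ i : Fin (m+4), (i:ℕ) = m+2 →
      s((F i : Pt), (F (i+1) : Pt)) = s((g2 (-1) : Pt), x) := by
    intro i hi
    have hi3 : (i:ℕ) < m+3 := by omega
    have hilast : i < Fin.last (m+3) := by
      rw [Fin.lt_iff_val_lt_val]; simp; omega
    have hi1 : ((i+1 : Fin (m+4)) : ℕ) = (i:ℕ)+1 := Fin.val_add_one_of_lt hilast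
    have e1 : (⟨(i:ℕ), hi3⟩ : Fin (m+3)) = -1 := by
      apply Fin.ext
      rw [hneg1]; exact hi
    rw [hFlt i hi3, hFxval (i+1) (by omega), e1]
  have hOEx : ∀ i : Fin (m+4), (i:ℕ) = m+3 →
      s((F i : Pt), (F (i+1) : Pt)) = s(x, (g2 0 : Pt)) := by
    intro i hi
    have hilast : i = Fin.last (m+3) := Fin.ext (by simpa using hi)
    have hip1 : i + 1 = 0 := by rw [hilast]; exact Fin.last_add_one _
    have e1 : (⟨((0 : Fin (m+4)):ℕ), by simp⟩ : Fin (m+3)) = 0 := by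
      apply Fin.ext; simp
    rw [hFxval i (by omega), hip1, hFlt 0 (by simp), e1]
  ext e
  simp only [Finset.mem_image, Finset.mem_univ, true_and, Finset.mem_union,
    Finset.mem_erase, Finset.mem_insert, Finset.mem_singleton]
  constructor
  · rintro ⟨i, rfl⟩
    by_cases hc1 : (i:ℕ) < m+2
    · left
      set a : Fin (m+3) := ⟨(i:ℕ), by omega⟩ with hadef
      have heval := hOE a hc1 i rfl
      refine ⟨?_, a, heval.symm⟩
      rw [heval]
      intro hcontra
      have hc0 : (0 : Fin (m+3)) = -1 + 1 := by ring
      rw [hc0] at hcontra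
      have : a = -1 := pair_inj _ hg2inj a (-1) hcontra
      have : (a:ℕ) = m+2 := by rw [this, hneg1]
      simp [hadef] at this
      omega
    · by_cases hc2 : (i:ℕ) = m+2
      · right; left; exact hOEend i hc2
      · have hc3 : (i:ℕ) = m+3 := by omega
        right; right; exact hOEx i hc3
  · rintro (⟨hne, a, rfl⟩ | heq | heq)
    · have ha : (a:ℕ) < m+2 := by
        rcases Nat.lt_or_ge (a:ℕ) (m+2) with h' | h'
        · exact h'
        · exfalso
          have : a = -1 := Fin.ext (by rw [hneg1]; omega)
          subst this
          apply hne
          have harith : (-1 : Fin (m+3)) + 1 = 0 := by ring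
          rw [harith]
      exact ⟨⟨(a:ℕ), by omega⟩, hOE a ha _ rfl⟩
    · exact ⟨⟨m+2, by omega⟩, by rw [hOEend ⟨m+2, by omega⟩ rfl, heq]⟩
    · exact ⟨⟨m+3, by omega⟩, by rw [hOEx ⟨m+3, by omega⟩ rfl, heq]⟩
lemma chart_det (lam : ℝ) (u v : Pt) :
    L lam u * M lam v - M lam u * L lam v = (1 + lam^2) * det2 u v := by
  simp only [L, M, det2]; ring

lemma L_sub (lam : ℝ) (u v : Pt) : L lam (u - v) = L lam u - L lam v := by
  simp only [L, Prod.fst_sub, Prod.snd_sub]; ring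

lemma L_seg_min {lam : ℝ} {a b y : Pt} (h : y ∈ segment ℝ a b) :
    min (L lam a) (L lam b) ≤ L lam y := by
  obtain ⟨t, ht0, ht1, hy1, hy2⟩ := seg_param h
  have hyL : L lam y = (1 - t) * L lam a + t * L lam b := by
    simp only [L, hy1, hy2]; ring
  rcases le_total (L lam a) (L lam b) with hab | hab
  · rw [min_eq_left hab]; nlinarith
  · rw [min_eq_right hab]; nlinarith

set_option maxHeartbeats 2000000 in
lemma key_step {S : Finset Pt} (hS : GenPos S) (h3 : 3 ≤ S.card) :
    ∃ x : Pt, x ∉ S ∧ GenPos (insert x S) ∧ scCount S ≤ scCount (insert x S) := by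
  classical
  obtain ⟨lam, hlam⟩ := exists_good_lam S
  have hSne : S.Nonempty := Finset.card_pos.1 (by omega)
  obtain ⟨p, hp, hple⟩ := S.exists_max_image (L lam) hSne
  have hmax : ∀ r ∈ S, r ≠ p → L lam r < L lam p := fun r hr hrp =>
    lt_of_le_of_ne (hple r hr) ((hlam r hr p hp hrp).1)
  set w : Pt := ((1 : ℝ), lam) with hw
  have hwdet : ∀ u ∈ S, ∀ v ∈ S, u ≠ v → det2 w (v - u) ≠ 0 := by
    intro u hu v hv huv
    have := (hlam u hu v hv huv).2
    simp only [M, det2, hw] at this ⊢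
    intro hc; apply this; linarith
  obtain ⟨ε, hεpos, hxcol, hxseg⟩ := exists_good_eps S p w hwdet
  set x : Pt := p + ε • w with hxdef
  have hx1 : x.1 = p.1 + ε := by simp [hxdef, hw]
  have hx2 : x.2 = p.2 + ε * lam := by simp [hxdef, hw]
  have hlampos : 0 < 1 + lam^2 := by positivity
  have hLx : L lam (x - p) = ε * (1 + lam^2) := by
    simp only [L, Prod.fst_sub, Prod.snd_sub, hx1, hx2]; ring
  have hMx : M lam (x - p) = 0 := by
    simp only [M, Prod.fst_sub, Prod.snd_sub, hx1, hx2]; ring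
  have hEpos : 0 < L lam (x - p) := by rw [hLx]; positivity
  have hxS : x ∉ S := by
    intro hxS
    rcases eq_or_ne x p with hxp | hxp
    · have h0 : L lam (x - p) = 0 := by rw [hxp]; simp [L]
      rw [hLx] at h0; nlinarith
    · have h1 : L lam x < L lam p := hmax x hxS hxp
      have h2 : L lam x - L lam p = ε * (1 + lam^2) := by rw [← L_sub, hLx]
      nlinarith
  have hgp' : GenPos (insert x S) := by
    intro u hu v hv r hr huv hur hvr
    simp only [Finset.mem_insert] at hu hv hr
    rcases hu with rfl | hu
    · rcases hv with rfl | hv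
      · exact absurd rfl huv
      · rcases hr with rfl | hr
        · exact absurd rfl hur
        · exact hxcol v hv r hr hvr
    · rcases hv with rfl | hv
      · rcases hr with rfl | hr
        · exact absurd rfl hvr
        · have hset : ({u, x, r} : Set Pt) = {x, u, r} := by
            ext z; simp; tauto
          rw [hset]
          exact hxcol u hu r hr hur
      · rcases hr with rfl | hr
        · have hset : ({u, v, x} : Set Pt) = {x, u, v} := by
            ext z; simp; tauto
          rw [hset]
          exact hxcol u hu v hv huv
        · exact hS u hu v hv r hr huv hur hvr
  have hxp : x ≠ p := by
    intro hxp
    have h0 : L lam (x - p) = 0 := by rw [hxp]; simp [L]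
    rw [hLx] at h0; nlinarith
  refine ⟨x, hxS, hgp', ?_⟩
  have hbuild : ∀ C : {G : PlaneGraph S // IsSpanningCycle G},
      ∃ C' : {G' : PlaneGraph (insert x S) // IsSpanningCycle G'}, ∃ q : Pt,
        q ∈ S ∧ q ≠ p ∧ s(p, q) ∈ C.1.edges ∧
        C'.1.edges = (C.1.edges.erase s(p, q)) ∪ {s(p, x), s(x, q)} := by
    rintro ⟨G, hG⟩
    obtain ⟨-, f, hf⟩ := hG
    obtain ⟨m, hm⟩ : ∃ m, S.card = m+3 := ⟨S.card - 3, by omega⟩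
    obtain ⟨g, hg⟩ := cycle_edges_reindex f hm
    have hedges : G.edges
        = Finset.image (fun i : Fin (m+3) => s((g i : Pt), (g (i+1) : Pt))) Finset.univ := by
      rw [hf, hg]
    set k : Fin (m+3) := g.symm ⟨p, hp⟩ with hkdef
    have hk : (g k : Pt) = p := by rw [hkdef]; simp
    obtain ⟨hmem1, hmem2, hne1, hne2, hne12, hclass⟩ := nbrs g k hk
    rw [← hedges] at hmem1 hmem2
    set a : Pt := (g (k+1) : Pt) with hadef
    set b : Pt := (g (k-1) : Pt) with hbdef
    have haS : a ∈ S := (g (k+1)).2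
    have hbS : b ∈ S := (g (k-1)).2
    have hDab : det2 (a - p) (b - p) ≠ 0 := by
      have hcol := hS p hp a haS b hbS (Ne.symm hne1) (Ne.symm hne2) hne12
      rw [collinear_iff_det] at hcol
      exact hcol
    have hMa : M lam (a - p) ≠ 0 := (hlam p hp a haS (Ne.symm hne1)).2
    have hMb : M lam (b - p) ≠ 0 := (hlam p hp b hbS (Ne.symm hne2)).2
    have hDchart : L lam (a-p) * M lam (b-p) - M lam (a-p) * L lam (b-p) ≠ 0 := by
      rw [chart_det]; exact mul_ne_zero (ne_of_gt hlampos) hDab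
    obtain ⟨q, o, jj, hqS, hoS, hqp, hop, hqo, hqedge, hclass2, hrule, hjj⟩ :
        ∃ q o : Pt, ∃ jj : Fin (m+3), q ∈ S ∧ o ∈ S ∧ q ≠ p ∧ o ≠ p ∧ q ≠ o ∧
          s(p, q) ∈ G.edges ∧
          (∀ e ∈ G.edges, p ∈ e → e = s(p, q) ∨ e = s(p, o)) ∧
          (0 < (L lam (q-p) * M lam (o-p) - M lam (q-p) * L lam (o-p)) * M lam (o-p)
            ∨ M lam (q-p) * M lam (o-p) < 0) ∧
          (((g jj : Pt) = p ∧ (g (jj+1) : Pt) = q)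
            ∨ ((g jj : Pt) = q ∧ (g (jj+1) : Pt) = p)) := by
      by_cases hsign :
          0 < (L lam (a-p) * M lam (b-p) - M lam (a-p) * L lam (b-p)) * M lam (b-p)
      · refine ⟨a, b, k, haS, hbS, hne1, hne2, hne12, hmem1, ?_, Or.inl hsign,
          Or.inl ⟨hk, rfl⟩⟩
        intro e he hpe
        rw [hedges] at he
        exact hclass e he hpe
      · have hkk : (g (k-1+1) : Pt) = p := by rw [show k-1+1 = k by ring, hk]
        refine ⟨b, a, k-1, hbS, haS, hne2, hne1, fun h => hne12 h.symm, hmem2, ?_, ?_,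
          Or.inr ⟨rfl, hkk⟩⟩
        · intro e he hpe
          rw [hedges] at he
          exact (hclass e he hpe).symm
        · push_neg at hsign
          have hDa_neg : (L lam (a-p) * M lam (b-p) - M lam (a-p) * L lam (b-p))
              * M lam (b-p) < 0 :=
            lt_of_le_of_ne hsign (mul_ne_zero hDchart hMb)
          by_cases hMM : M lam (b-p) * M lam (a-p) < 0
          · exact Or.inr hMM
          · left
            push_neg at hMM
            have hMMpos : 0 < M lam (b-p) * M lam (a-p) :=
              lt_of_le_of_ne hMM (Ne.symm (mul_ne_zero hMb hMa))
            have hMb2 : 0 < M lam (b-p)^2 := by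
              rcases lt_or_gt_of_ne hMb with h' | h' <;> nlinarith
            nlinarith [mul_pos (neg_pos.2 hDa_neg) hMMpos]
    -- basic sign facts
    have hLq : L lam (q - p) < 0 := by rw [L_sub]; linarith [hmax q hqS hqp]
    have hLo : L lam (o - p) < 0 := by rw [L_sub]; linarith [hmax o hoS hop]
    have hMo : M lam (o - p) ≠ 0 := (hlam p hp o hoS (Ne.symm hop)).2
    have hxq : x ≠ q := fun h => hxS (h ▸ hqS)
    have hLxp : L lam p < L lam x := by
      have h' := hLx
      rw [L_sub] at h'
      nlinarith
    -- q's other neighbor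
    have hqother : ∀ e ∈ G.edges, e ≠ s(p,q) → q ∈ e →
        ∃ v, v ∈ S ∧ v ≠ p ∧ v ≠ q ∧ e = s(q, v) := by
      set k' : Fin (m+3) := g.symm ⟨q, hqS⟩ with hk'def
      have hk' : (g k' : Pt) = q := by rw [hk'def]; simp
      obtain ⟨hm1', hm2', hn1', hn2', hn12', hclass'⟩ := nbrs g k' hk'
      intro e he hne hqe
      rw [hedges] at he
      rcases hclass' e he hqe with h' | h'
      · rcases eq_or_ne ((g (k'+1) : Pt)) p with hp' | hp'
        · exact absurd (by rw [h', hp', Sym2.eq_swap]) hne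
        · exact ⟨_, (g (k'+1)).2, hp', hn1', h'⟩
      · rcases eq_or_ne ((g (k'-1) : Pt)) p with hp' | hp'
        · exact absurd (by rw [h', hp', Sym2.eq_swap]) hne
        · exact ⟨_, (g (k'-1)).2, hp', hn2', h'⟩
    -- piece A : the two new edges
    have pieceA : ∀ y ∈ seg2 s(p,x) ∩ seg2 s(x,q), y ∈ s(p,x) ∧ y ∈ s(x,q) := by
      have hcol : ¬ Collinear ℝ ({x, p, q} : Set Pt) := hxcol p hp q hqS (Ne.symm hqp)
      rw [collinear_iff_det] at hcol
      intro y hy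
      have h1 : y ∈ segment ℝ x p := by rw [segment_symm]; exact hy.1
      have hyx := seg_common hcol y ⟨h1, hy.2⟩
      rw [hyx]
      exact ⟨Sym2.mem_iff.2 (Or.inr rfl), Sym2.mem_iff.2 (Or.inl rfl)⟩
    -- piece B : edge (p,x) against old edges
    have pieceB : ∀ e ∈ G.edges.erase s(p,q), ∀ y ∈ seg2 s(p,x) ∩ seg2 e,
        y ∈ s(p,x) ∧ y ∈ e := by
      intro e he
      revert he
      induction e using Sym2.ind with
      | _ u v =>
      intro he
      have hnepq : s(u,v) ≠ s(p,q) := (Finset.mem_erase.1 he).1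
      have he' : s(u,v) ∈ G.edges := (Finset.mem_erase.1 he).2
      by_cases hpe : p ∈ s(u,v)
      · have heo : s(u,v) = s(p,o) := by
          rcases hclass2 _ he' hpe with h' | h'
          · exact absurd h' hnepq
          · exact h'
        rw [heo]
        have hdet : det2 (x - p) (o - p) ≠ 0 := by
          intro h0
          have hch := chart_det lam (x-p) (o-p)
          rw [h0, mul_zero, hMx, zero_mul, sub_zero] at hch
          exact mul_ne_zero (ne_of_gt hEpos) hMo hch
        intro y hy
        have hyp := seg_common hdet y ⟨hy.1, hy.2⟩
        rw [hyp]
        exact ⟨Sym2.mem_iff.2 (Or.inl rfl), Sym2.mem_iff.2 (Or.inl rfl)⟩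
      · have huS : u ∈ S := G.endpoint_mem _ he' u (Sym2.mem_iff.2 (Or.inl rfl))
        have hvS : v ∈ S := G.endpoint_mem _ he' v (Sym2.mem_iff.2 (Or.inr rfl))
        have hup : u ≠ p := fun h' => hpe (Sym2.mem_iff.2 (Or.inl h'.symm))
        have hvp : v ≠ p := fun h' => hpe (Sym2.mem_iff.2 (Or.inr h'.symm))
        intro y hy
        exfalso
        have h1 : L lam y ≤ max (L lam u) (L lam v) := L_seg hy.2
        have h2 : min (L lam p) (L lam x) ≤ L lam y := L_seg_min hy.1
        rw [min_eq_left hLxp.le] at h2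
        have h3 : max (L lam u) (L lam v) < L lam p :=
          max_lt (hmax u huS hup) (hmax v hvS hvp)
        linarith
    -- piece C : edge (x,q) against old edges
    have pieceC : ∀ e ∈ G.edges.erase s(p,q), ∀ y ∈ seg2 s(x,q) ∩ seg2 e,
        y ∈ s(x,q) ∧ y ∈ e := by
      intro e he
      revert he
      induction e using Sym2.ind with
      | _ u v =>
      intro he
      have hnepq : s(u,v) ≠ s(p,q) := (Finset.mem_erase.1 he).1
      have he' : s(u,v) ∈ G.edges := (Finset.mem_erase.1 he).2
      by_cases hpe : p ∈ s(u,v)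
      · have heo : s(u,v) = s(p,o) := by
          rcases hclass2 _ he' hpe with h' | h'
          · exact absurd h' hnepq
          · exact h'
        rw [heo]
        have hempty : segment ℝ x q ∩ segment ℝ p o = ∅ :=
          no_cross hMx hEpos hLq hLo hrule
        intro y hy
        exact absurd hy (by rw [show seg2 s(x,q) ∩ seg2 s(p,o)
          = segment ℝ x q ∩ segment ℝ p o from rfl, hempty]; exact Set.notMem_empty y)
      · by_cases hqe : q ∈ s(u,v)
        · obtain ⟨v', hv'S, hv'p, hv'q, hev⟩ := hqother _ he' hnepq hqe
          rw [hev]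
          have hcolq : ¬ Collinear ℝ ({q, x, v'} : Set Pt) := by
            have hset : ({q, x, v'} : Set Pt) = {x, q, v'} := by ext z; simp; tauto
            rw [hset]
            exact hxcol q hqS v' hv'S (Ne.symm hv'q)
          rw [collinear_iff_det] at hcolq
          intro y hy
          have h1 : y ∈ segment ℝ q x := by rw [segment_symm]; exact hy.1
          have hyq := seg_common hcolq y ⟨h1, hy.2⟩
          rw [hyq]
          exact ⟨Sym2.mem_iff.2 (Or.inr rfl), Sym2.mem_iff.2 (Or.inl rfl)⟩
        · have huS : u ∈ S := G.endpoint_mem _ he' u (Sym2.mem_iff.2 (Or.inl rfl))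
          have hvS : v ∈ S := G.endpoint_mem _ he' v (Sym2.mem_iff.2 (Or.inr rfl))
          have hup : u ≠ p := fun h' => hpe (Sym2.mem_iff.2 (Or.inl h'.symm))
          have hvp : v ≠ p := fun h' => hpe (Sym2.mem_iff.2 (Or.inr h'.symm))
          have huq : u ≠ q := fun h' => hqe (Sym2.mem_iff.2 (Or.inl h'.symm))
          have hvq : v ≠ q := fun h' => hqe (Sym2.mem_iff.2 (Or.inr h'.symm))
          have hold : segment ℝ p q ∩ segment ℝ u v = ∅ := by
            rw [Set.eq_empty_iff_forall_notMem]
            intro y hy'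
            have hcross := G.noncrossing s(p,q) hqedge s(u,v) he'
              (fun h' => hnepq h'.symm) y hy'
            rcases Sym2.mem_iff.1 hcross.1 with rfl | rfl <;>
              rcases Sym2.mem_iff.1 hcross.2 with h'' | h''
            · exact hup h''.symm
            · exact hvp h''.symm
            · exact huq h''.symm
            · exact hvq h''.symm
          have hres := hxseg q hqS u huS v hvS hold
          intro y hy
          exact absurd hy (by rw [show seg2 s(x,q) ∩ seg2 s(u,v)
            = segment ℝ x q ∩ segment ℝ u v from rfl, hres]; exact Set.notMem_empty y)
    -- assemble the new plane graph
    set newE : Finset (Sym2 Pt) := (G.edges.erase s(p,q)) ∪ {s(p,x), s(x,q)} with hnewE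
    have hmemnew : ∀ e, e ∈ newE ↔
        (e ∈ G.edges.erase s(p,q) ∨ e = s(p,x) ∨ e = s(x,q)) := by
      intro e
      simp only [hnewE, Finset.mem_union, Finset.mem_insert, Finset.mem_singleton,
        Finset.mem_erase] <;> tauto
    have hend : ∀ e ∈ newE, ∀ p', p' ∈ e → p' ∈ insert x S := by
      intro e he p' hpe
      rcases (hmemnew e).1 he with h' | h' | h'
      · exact Finset.mem_insert_of_mem
          (G.endpoint_mem e (Finset.mem_erase.1 h').2 p' hpe)
      · subst h'
        rcases Sym2.mem_iff.1 hpe with rfl | rfl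
        · exact Finset.mem_insert_of_mem hp
        · exact Finset.mem_insert_self x S
      · subst h'
        rcases Sym2.mem_iff.1 hpe with rfl | rfl
        · exact Finset.mem_insert_self x S
        · exact Finset.mem_insert_of_mem hqS
    have hdiag : ∀ e ∈ newE, ¬ e.IsDiag := by
      intro e he
      rcases (hmemnew e).1 he with h' | h' | h'
      · exact G.not_isDiag e (Finset.mem_erase.1 h').2
      · subst h'
        rw [Sym2.isDiag_iff_proj_eq]
        exact fun h'' => hxp h''.symm
      · subst h'
        rw [Sym2.isDiag_iff_proj_eq]
        exact hxq
    have hcrossnew : ∀ e₁ ∈ newE, ∀ e₂ ∈ newE, e₁ ≠ e₂ →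
        ∀ y ∈ seg2 e₁ ∩ seg2 e₂, y ∈ e₁ ∧ y ∈ e₂ := by
      intro e₁ he₁ e₂ he₂ hne y hy
      rcases (hmemnew e₁).1 he₁ with h₁ | h₁ | h₁ <;>
        rcases (hmemnew e₂).1 he₂ with h₂ | h₂ | h₂
      · exact G.noncrossing e₁ (Finset.mem_erase.1 h₁).2 e₂ (Finset.mem_erase.1 h₂).2 hne y hy
      · subst h₂
        have h' := pieceB e₁ h₁ y ⟨hy.2, hy.1⟩
        exact ⟨h'.2, h'.1⟩
      · subst h₂
        have h' := pieceC e₁ h₁ y ⟨hy.2, hy.1⟩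
        exact ⟨h'.2, h'.1⟩
      · subst h₁
        exact pieceB e₂ h₂ y hy
      · exact absurd (h₁.trans h₂.symm) hne
      · subst h₁; subst h₂
        exact pieceA y hy
      · subst h₁
        exact pieceC e₂ h₂ y hy
      · subst h₁; subst h₂
        have h' := pieceA y ⟨hy.2, hy.1⟩
        exact ⟨h'.2, h'.1⟩
      · exact absurd (h₁.trans h₂.symm) hne
    set G' : PlaneGraph (insert x S) := ⟨newE, hend, hdiag, hcrossnew⟩ with hG'
    have hsc : IsSpanningCycle G' := by
      constructor
      · rw [Finset.card_insert_of_notMem hxS]; omega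
      · obtain ⟨f', himg'⟩ := insert_cycle hm g hxS jj
        refine ⟨f', ?_⟩
        rw [himg']
        rcases hjj with ⟨h1, h2⟩ | ⟨h1, h2⟩
        · rw [h1, h2, ← hedges]
        · rw [h1, h2, ← hedges]
          rw [show s(q,p) = s(p,q) from Sym2.eq_swap,
            show s(q,x) = s(x,q) from Sym2.eq_swap,
            show s(x,p) = s(p,x) from Sym2.eq_swap, Finset.pair_comm]
    exact ⟨⟨G', hsc⟩, q, hqS, hqp, hqedge, rfl⟩
  choose Φ qf hqf1 hqf2 hqf3 hqf4 using hbuild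
  have hinj : Function.Injective Φ := by
    intro C1 C2 h12
    have hE12 : (Φ C1).1.edges = (Φ C2).1.edges := by rw [h12]
    have hxe1 : ∀ e ∈ C1.1.edges, x ∉ e := fun e he hxe =>
      hxS (C1.1.endpoint_mem e he x hxe)
    have hxe2 : ∀ e ∈ C2.1.edges, x ∉ e := fun e he hxe =>
      hxS (C2.1.endpoint_mem e he x hxe)
    have hqeq : qf C1 = qf C2 := by
      have hmem : s(x, qf C1) ∈ (Φ C2).1.edges := by
        rw [← hE12, hqf4 C1]
        exact Finset.mem_union_right _ (by simp)
      rw [hqf4 C2] at hmem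
      rcases Finset.mem_union.1 hmem with h' | h'
      · exact ((hxe2 _ (Finset.mem_erase.1 h').2) (Sym2.mem_iff.2 (Or.inl rfl))).elim
      · simp only [Finset.mem_insert, Finset.mem_singleton] at h'
        rcases h' with h' | h'
        · rw [Sym2.eq_iff] at h'
          rcases h' with ⟨hxp', -⟩ | ⟨-, hq1p⟩
          · exact absurd hxp' hxp
          · exact absurd hq1p (hqf2 C1)
        · rw [Sym2.eq_iff] at h'
          rcases h' with ⟨-, hq⟩ | ⟨hxq2, -⟩
          · exact hq
          · exact absurd (hxq2 ▸ hqf1 C2) hxS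
    have hedgeeq : C1.1.edges = C2.1.edges := by
      ext e
      by_cases hxe : x ∈ e
      · exact ⟨fun he => ((hxe1 e he) hxe).elim, fun he => ((hxe2 e he) hxe).elim⟩
      · by_cases hepq : e = s(p, qf C1)
        · rw [hepq]
          refine ⟨fun _ => ?_, fun _ => hqf3 C1⟩
          rw [hqeq]
          exact hqf3 C2
        · have hepq2 : e ≠ s(p, qf C2) := by rw [← hqeq]; exact hepq
          have h1 : e ∈ C1.1.edges ↔ e ∈ (Φ C1).1.edges := by
            rw [hqf4 C1]
            constructor
            · intro he
              exact Finset.mem_union_left _ (Finset.mem_erase.2 ⟨hepq, he⟩)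
            · intro he
              rcases Finset.mem_union.1 he with h' | h'
              · exact (Finset.mem_erase.1 h').2
              · exfalso
                simp only [Finset.mem_insert, Finset.mem_singleton] at h'
                rcases h' with h' | h'
                · rw [h'] at hxe
                  exact hxe (Sym2.mem_iff.2 (Or.inr rfl))
                · rw [h'] at hxe
                  exact hxe (Sym2.mem_iff.2 (Or.inl rfl))
          have h2 : e ∈ C2.1.edges ↔ e ∈ (Φ C2).1.edges := by
            rw [hqf4 C2]
            constructor
            · intro he
              exact Finset.mem_union_left _ (Finset.mem_erase.2 ⟨hepq2, he⟩)
            · intro he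
              rcases Finset.mem_union.1 he with h' | h'
              · exact (Finset.mem_erase.1 h').2
              · exfalso
                simp only [Finset.mem_insert, Finset.mem_singleton] at h'
                rcases h' with h' | h'
                · rw [h'] at hxe
                  exact hxe (Sym2.mem_iff.2 (Or.inr rfl))
                · rw [h'] at hxe
                  exact hxe (Sym2.mem_iff.2 (Or.inl rfl))
          rw [h1, hE12, ← h2]
    exact Subtype.ext (PlaneGraph.ext' hedgeeq)
  exact Nat.card_le_card_of_injective Φ hinj



end S7

/-- If `sc(S) ≤ A · c^{|S|}` for all even-size point sets in general
position, then an analogous bound holds for all odd-size point sets. -/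
theorem statement7 (c A : ℝ) (hc : 1 < c) (hA : 0 < A)
    (h : ∀ S : Finset Pt, GenPos S → Even S.card →
      (scCount S : ℝ) ≤ A * c ^ S.card) :
    ∃ A' : ℝ, 0 < A' ∧ ∀ S : Finset Pt, GenPos S → Odd S.card →
      (scCount S : ℝ) ≤ A' * c ^ S.card := by
  have hc0 : (0:ℝ) < c := lt_trans one_pos hc
  refine ⟨A * c, mul_pos hA hc0, ?_⟩
  intro S hS hodd
  by_cases h3 : 3 ≤ S.card
  · obtain ⟨x, hxS, hgp, hle⟩ := S7.key_step hS h3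
    have heven : Even (insert x S).card := by
      rw [Finset.card_insert_of_notMem hxS]
      exact Odd.add_one hodd
    have hb := h (insert x S) hgp heven
    have hcardins : (insert x S).card = S.card + 1 := Finset.card_insert_of_notMem hxS
    calc (scCount S : ℝ) ≤ (scCount (insert x S) : ℝ) := Nat.cast_le.2 hle
      _ ≤ A * c ^ (insert x S).card := hb
      _ = A * c * c ^ S.card := by rw [hcardins, pow_succ]; ring
  · have h0 : scCount S = 0 := by
      have hie : IsEmpty {G : PlaneGraph S // IsSpanningCycle G} :=
        ⟨fun C => h3 C.2.1⟩
      rw [scCount, Nat.card_eq_zero]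
      exact Or.inl hie
    rw [h0]
    simp only [Nat.cast_zero]
    positivity

end
end
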